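/- arXiv:1511.01153 — 4 statements merged into one kernel-verified Lean document; each statement's English description precedes it below -/
import Mathlib

section
/- Let (E, ‖·‖) be an L^∞-normed module with metric d(x,y) = E[1 ∧ ‖x−y‖]. If {x_n} is a d-Cauchy sequence in E and {ξ_n} is a sequence in L^∞ converging in probability to some ξ ∈ L^0, then {ξ_n x_n} is a d-Cauchy sequence in E. Moreover, if {η_n} is another sequence in L^∞ converging in probability to ξ and {y_n} is a d-Cauchy sequence with d(x_n, y_n) → 0, then d(ξ_n x_n, η_n y_n) → 0. -/
open MeasureTheory Filter
noncomputable section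

variable {Ω : Type} [MeasurableSpace Ω] {μ : Measure Ω}

/-- `L⁰(𝓕)`: equivalence classes of random variables, as a commutative ring. -/
instance : NatCast (Ω →ₘ[μ] ℝ) := ⟨fun n => AEEqFun.const Ω (n : ℝ)⟩
instance : IntCast (Ω →ₘ[μ] ℝ) := ⟨fun n => AEEqFun.const Ω (n : ℝ)⟩
instance : CommRing (Ω →ₘ[μ] ℝ) :=
  AEEqFun.toGerm_injective.commRing AEEqFun.toGerm AEEqFun.zero_toGerm AEEqFun.one_toGerm
    AEEqFun.add_toGerm AEEqFun.mul_toGerm AEEqFun.neg_toGerm AEEqFun.sub_toGerm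
    (fun _ _ => AEEqFun.smul_toGerm _ _) (fun _ _ => AEEqFun.smul_toGerm _ _)
    AEEqFun.pow_toGerm (fun _ => rfl) (fun _ => rfl)

/-- `L^∞(𝓕)`: the subring of essentially bounded random variables. -/
def Linf (μ : Measure Ω) : Subring (Ω →ₘ[μ] ℝ) where
  carrier := {ξ | ∃ c : ℝ, ∀ᵐ ω ∂μ, |ξ ω| ≤ c}
  zero_mem' := ⟨0, by filter_upwards [AEEqFun.coeFn_zero (β := ℝ) (μ := μ)] with ω h; simp [h]⟩
  one_mem' := ⟨1, by filter_upwards [AEEqFun.coeFn_one (β := ℝ) (μ := μ)] with ω h; simp [h]⟩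
  add_mem' := by
    rintro a b ⟨c, hc⟩ ⟨d, hd⟩
    exact ⟨c + d, by
      filter_upwards [AEEqFun.coeFn_add a b, hc, hd] with ω h1 h2 h3
      calc |(a + b) ω| = |a ω + b ω| := by rw [h1]; rfl
        _ ≤ |a ω| + |b ω| := abs_add_le _ _
        _ ≤ c + d := add_le_add h2 h3⟩
  mul_mem' := by
    rintro a b ⟨c, hc⟩ ⟨d, hd⟩
    exact ⟨|c| * |d|, by
      filter_upwards [AEEqFun.coeFn_mul a b, hc, hd] with ω h1 h2 h3
      calc |(a * b) ω| = |a ω * b ω| := by rw [h1]; rfl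
        _ = |a ω| * |b ω| := abs_mul _ _
        _ ≤ |c| * |d| :=
            mul_le_mul (h2.trans (le_abs_self c)) (h3.trans (le_abs_self d))
              (abs_nonneg _) (abs_nonneg _)⟩
  neg_mem' := by
    rintro a ⟨c, hc⟩
    exact ⟨c, by
      filter_upwards [AEEqFun.coeFn_neg a, hc] with ω h1 h2
      calc |(-a) ω| = |-(a ω)| := by rw [h1]; rfl
        _ = |a ω| := abs_neg _
        _ ≤ c := h2⟩

/-- the constant `c`, as an element of `L^∞`. -/
def LinfConst (μ : Measure Ω) (c : ℝ) : Linf μ :=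
  ⟨AEEqFun.const Ω c, |c|, by
    filter_upwards [AEEqFun.coeFn_const (α := Ω) (μ := μ) c] with ω h
    simp [h, Function.const]⟩

/-- the equivalence class `Ĩ_A` of the indicator function of a set `A`. -/
def indL0 (μ : Measure Ω) (A : Set Ω) (hA : MeasurableSet A) : Ω →ₘ[μ] ℝ :=
  AEEqFun.mk (A.indicator (1 : Ω → ℝ)) ((measurable_const.indicator hA).aestronglyMeasurable)

/-- a countable measurable partition of `Ω`. -/
structure MPartition (Ω : Type) [MeasurableSpace Ω] where
  A : ℕ → Set Ω
  meas : ∀ k, MeasurableSet (A k)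
  disj : ∀ m k, m ≠ k → A m ∩ A k = ∅
  cover : (⋃ k, A k) = Set.univ

/-- `Ĩ_{A_k}` for a member of a countable measurable partition. -/
def MPartition.ind (P : MPartition Ω) (μ : Measure Ω) (k : ℕ) : Ω →ₘ[μ] ℝ :=
  indL0 μ (P.A k) (P.meas k)

/-- `‖·‖` is an `L⁰`-norm making the `L⁰`-module `S` a random normed module. -/
structure IsRNNorm (μ : Measure Ω) {S : Type} [AddCommGroup S]
    [Module (Ω →ₘ[μ] ℝ) S] (n : S → Ω →ₘ[μ] ℝ) : Prop where
  nonneg : ∀ x, 0 ≤ n x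
  eq_zero_iff : ∀ x, n x = 0 ↔ x = 0
  norm_smul : ∀ (ξ : Ω →ₘ[μ] ℝ) (x : S), n (ξ • x) = |ξ| * n x
  norm_add_le : ∀ x y, n (x + y) ≤ n x + n y

/-- `‖·‖` is an `L^∞`-norm making the `L^∞`-module `E` an `L^∞`-normed module. -/
structure IsLinfNorm (μ : Measure Ω) {E : Type} [AddCommGroup E]
    [Module (Linf μ) E] (n : E → Ω →ₘ[μ] ℝ) : Prop where
  nonneg : ∀ x, 0 ≤ n x
  mem_Linf : ∀ x, n x ∈ Linf μ
  eq_zero_iff : ∀ x, n x = 0 ↔ x = 0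
  norm_smul : ∀ (ξ : Linf μ) (x : E), n (ξ • x) = |(ξ : Ω →ₘ[μ] ℝ)| * n x
  norm_add_le : ∀ x y, n (x + y) ≤ n x + n y

/-- the metric `d(x,y) = E[1 ∧ ‖x-y‖]` associated to an `L⁰`- (or `L^∞`-) norm. -/
def ndist {S : Type} [AddCommGroup S] (μ : Measure Ω) (n : S → Ω →ₘ[μ] ℝ) (x y : S) : ℝ :=
  ∫ ω, min 1 |n (x - y) ω| ∂μ

/-- the distance of convergence in probability on `L⁰`. -/
def dProb (μ : Measure Ω) (ξ η : Ω →ₘ[μ] ℝ) : ℝ := ∫ ω, min 1 |ξ ω - η ω| ∂μ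

/-- Cauchy property of a sequence with respect to a distance function. -/
def dCauchy {S : Type} (d : S → S → ℝ) (x : ℕ → S) : Prop :=
  ∀ ε > (0:ℝ), ∃ N : ℕ, ∀ m ≥ N, ∀ k ≥ N, d (x m) (x k) < ε

/-- convergence of a sequence with respect to a distance function. -/
def dTendsto {S : Type} (d : S → S → ℝ) (x : ℕ → S) (y : S) : Prop :=
  Tendsto (fun k => d (x k) y) atTop (nhds 0)

/-- completeness with respect to a distance function. -/
def dComplete {S : Type} (d : S → S → ℝ) : Prop :=
  ∀ x : ℕ → S, dCauchy d x → ∃ y, dTendsto d x y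

/-- a bundled complete-or-not random normed module over `L⁰(𝓕)`. -/
structure RNMod (Ω : Type) [MeasurableSpace Ω] (μ : Measure Ω) where
  carrier : Type
  acg : AddCommGroup carrier
  mod : @Module (Ω →ₘ[μ] ℝ) carrier _ acg.toAddCommMonoid
  rnorm : carrier → Ω →ₘ[μ] ℝ
  isRNNorm : IsRNNorm μ rnorm

attribute [instance] RNMod.acg RNMod.mod

/-- the metric of the `(ε,λ)`-topology of a random normed module. -/
def RNMod.dist (S : RNMod Ω μ) : S.carrier → S.carrier → ℝ := ndist μ S.rnorm

/-- completeness of a random normed module in the `(ε,λ)`-topology. -/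
def RNMod.Complete (S : RNMod Ω μ) : Prop := dComplete S.dist

/-- the essential supremum `‖ξ‖_∞` of (the absolute value of) a random variable. -/
def NinfV (μ : Measure Ω) (ξ : Ω →ₘ[μ] ℝ) : ℝ := essSup (fun ω => |ξ ω|) μ

/-- `T` is an `L^∞`-module homomorphism from `E` into (the `L^∞`-module underlying) `S`. -/
def IsLinfModHom (μ : Measure Ω) {E S : Type} [AddCommGroup E] [Module (Linf μ) E]
    [AddCommGroup S] [Module (Ω →ₘ[μ] ℝ) S] (T : E → S) : Prop :=
  (∀ x y, T (x + y) = T x + T y) ∧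
  (∀ (ξ : Linf μ) (x : E), T (ξ • x) = ((ξ : Ω →ₘ[μ] ℝ)) • T x)

/-- `S` together with `T` is an `L⁰`-extension of the `L^∞`-normed module `(E, n)`:
`S` is a complete random normed module, `T` is a norm-preserving `L^∞`-module
homomorphism with dense range. -/
def IsL0Extension (μ : Measure Ω) {E : Type} [AddCommGroup E] [Module (Linf μ) E]
    (n : E → Ω →ₘ[μ] ℝ) (S : RNMod Ω μ) (T : E → S.carrier) : Prop :=
  S.Complete ∧ IsLinfModHom μ T ∧ (∀ x, S.rnorm (T x) = n x) ∧
  (∀ y : S.carrier, ∀ ε > (0:ℝ), ∃ x : E, S.dist (T x) y < ε)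

/-- the set of elements of an `L⁰`-normed module with essentially bounded norm. -/
def LinfPart (μ : Measure Ω) {S : Type} (n : S → Ω →ₘ[μ] ℝ) : Set S := {x | n x ∈ Linf μ}

/-- convergence in probability of a sequence of random variables. -/
def TendstoInProb (μ : Measure Ω) (ξ : ℕ → Ω →ₘ[μ] ℝ) (l : Ω →ₘ[μ] ℝ) : Prop :=
  Tendsto (fun k => dProb μ (ξ k) l) atTop (nhds 0)

/-- the countable concatenation hull `H⁰_cc(E)` of a subset `E` of a random normed module. -/
def Hcc (S : RNMod Ω μ) (E : Set S.carrier) : Set S.carrier :=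
  {z | ∃ (x : ℕ → S.carrier) (P : MPartition Ω),
    (∀ k, x k ∈ E) ∧ ∀ k, P.ind μ k • z = P.ind μ k • x k}

/-- `L(E) = L⁰ * E`, the set of `L⁰`-multiples of elements of `E`. -/
def Lgen (S : RNMod Ω μ) (E : Set S.carrier) : Set S.carrier :=
  {z | ∃ (ξ : Ω →ₘ[μ] ℝ) (x : S.carrier), x ∈ E ∧ z = ξ • x}

/-- `f` is a continuous `L^∞`-module homomorphism from `(E, n)` to `L^∞`, i.e. a member of
the dual `L^∞`-normed module `E′`. -/
def IsLinfDual (μ : Measure Ω) {E : Type} [AddCommGroup E] [Module (Linf μ) E]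
    (n : E → Ω →ₘ[μ] ℝ) (f : E → Ω →ₘ[μ] ℝ) : Prop :=
  (∀ x, f x ∈ Linf μ) ∧ (∀ x y, f (x + y) = f x + f y) ∧
  (∀ (ξ : Linf μ) (x : E), f (ξ • x) = (ξ : Ω →ₘ[μ] ℝ) * f x) ∧
  (∀ ε > (0:ℝ), ∃ δ > (0:ℝ), ∀ x, NinfV μ (n x) < δ → NinfV μ (f x) < ε)

/-- `g` is a continuous `L⁰`-module homomorphism from `S` to `L⁰`, i.e. a member of the
random conjugate space `S^*`. -/
def IsRNDual (μ : Measure Ω) (S : RNMod Ω μ) (g : S.carrier → Ω →ₘ[μ] ℝ) : Prop :=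
  (∀ x y, g (x + y) = g x + g y) ∧ (∀ (ξ : Ω →ₘ[μ] ℝ) x, g (ξ • x) = ξ * g x) ∧
  (∀ ε > (0:ℝ), ∃ δ > (0:ℝ), ∀ x, ndist μ S.rnorm x 0 < δ → dProb μ (g x) 0 < ε)

/-- the set `{|f(x)| : ‖x‖ ≤ 1}` whose supremum in the lattice `L⁰` is the dual norm `‖f‖′`. -/
def dualBall {X : Type} (n : X → Ω →ₘ[μ] ℝ) (f : X → Ω →ₘ[μ] ℝ) : Set (Ω →ₘ[μ] ℝ) :=
  {t | ∃ x, n x ≤ 1 ∧ t = |f x|}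


section Helpers

variable [IsProbabilityMeasure μ]

omit [IsProbabilityMeasure μ] in
private lemma R1' {a b : ℝ} (ha : 0 ≤ a) (hb : 0 ≤ b) : min 1 (a + b) ≤ min 1 a + min 1 b := by
  rcases le_total 1 a with h | h
  · have : min 1 a = 1 := min_eq_left h
    nlinarith [min_le_left 1 (a+b), le_min zero_le_one hb]
  rcases le_total 1 b with h' | h'
  · have : min 1 b = 1 := min_eq_left h'
    nlinarith [min_le_left 1 (a+b), le_min zero_le_one ha]
  · rw [min_eq_right h, min_eq_right h']
    exact min_le_right _ _

omit [IsProbabilityMeasure μ] in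
private lemma Rmono' {a b : ℝ} (h : a ≤ b) : min 1 a ≤ min 1 b := min_le_min le_rfl h

omit [IsProbabilityMeasure μ] in
private lemma R2' {C u v : ℝ} (hC : 1 ≤ C) (hv : 0 ≤ v) :
    min 1 (u * v) ≤ C * min 1 v + min 1 (max (u - C) 0) := by
  have h1 : (0:ℝ) ≤ min 1 (max (u - C) 0) := le_min (by norm_num) (le_max_right _ _)
  rcases le_total u C with h | h
  · have : min 1 (u * v) ≤ C * min 1 v := by
      rcases le_total v 1 with hv1 | hv1
      · calc min 1 (u * v) ≤ u * v := min_le_right _ _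
          _ ≤ C * v := by nlinarith
          _ = C * min 1 v := by rw [min_eq_right hv1]
      · calc min 1 (u * v) ≤ 1 := min_le_left _ _
          _ ≤ C * min 1 v := by rw [min_eq_left hv1]; nlinarith
    linarith
  · rcases le_total (u - C) 1 with h2 | h2
    · rw [max_eq_left (by linarith), min_eq_right h2]
      rcases le_total (u*v) 1 with h3 | h3
      · have hv1 : v ≤ 1 := by nlinarith
        rw [min_eq_right h3, min_eq_right hv1]; nlinarith
      · rw [min_eq_left h3]
        rcases le_total v 1 with hv1 | hv1
        · rw [min_eq_right hv1]
          nlinarith [mul_nonneg (sub_nonneg.2 h) (sub_nonneg.2 (by nlinarith : v ≤ 1))]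
        · rw [min_eq_left hv1]; nlinarith
    · have : min 1 (max (u - C) 0) = 1 := min_eq_left (le_max_of_le_left h2)
      rw [this]
      have := min_le_left 1 (u*v)
      nlinarith [le_min zero_le_one hv,
        mul_nonneg (by linarith : (0:ℝ) ≤ C) (le_min zero_le_one hv)]

omit [IsProbabilityMeasure μ] in
private lemma R4' {a b a' C : ℝ} (hab : a ≤ b + a') (hb : 0 ≤ b) :
    min 1 (max (a - C) 0) ≤ min 1 b + min 1 (max (a' - C) 0) := by
  have h0 : max (a - C) 0 ≤ b + max (a' - C) 0 := by
    rcases le_total (a - C) 0 with h | h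
    · rw [max_eq_right h]; positivity
    · rw [max_eq_left h]
      have h5 : a - C ≤ b + (a' - C) := by linarith
      exact h5.trans (by gcongr; exact le_max_left _ _)
  exact (Rmono' h0).trans (R1' hb (le_max_right _ _))

private lemma int_min_one {s : Ω → ℝ} (hs : AEMeasurable s μ) (h0 : ∀ᵐ ω ∂μ, 0 ≤ s ω) :
    Integrable (fun ω => min 1 (s ω)) μ := by
  refine Integrable.mono' (integrable_const 1) (aemeasurable_const.min hs).aestronglyMeasurable ?_
  filter_upwards [h0] with ω h
  rw [Real.norm_eq_abs, abs_of_nonneg (le_min zero_le_one h)]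
  exact min_le_left _ _

omit [IsProbabilityMeasure μ] in
private lemma am_abs {f : Ω → ℝ} (hf : AEMeasurable f μ) :
    AEMeasurable (fun ω => |f ω|) μ := hf.sup hf.neg

/-- the tail integral `∫ min(1, (|f| - C)⁺)`. -/
private def tailInt (μ : Measure Ω) (f : Ω →ₘ[μ] ℝ) (C : ℝ) : ℝ :=
  ∫ ω, min 1 (max (|f ω| - C) 0) ∂μ

private lemma tail_intble (f : Ω →ₘ[μ] ℝ) (C : ℝ) :
    Integrable (fun ω => min 1 (max (|f ω| - C) 0)) μ :=
  int_min_one (((am_abs f.aemeasurable).sub aemeasurable_const).max aemeasurable_const)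
    (Eventually.of_forall fun _ => le_max_right _ _)

omit [IsProbabilityMeasure μ] in
private lemma tail_nonneg (f : Ω →ₘ[μ] ℝ) (C : ℝ) : 0 ≤ tailInt μ f C :=
  integral_nonneg fun _ => le_min zero_le_one (le_max_right _ _)

private lemma tail_mono_C (f : Ω →ₘ[μ] ℝ) {C C' : ℝ} (h : C ≤ C') :
    tailInt μ f C' ≤ tailInt μ f C := by
  refine integral_mono (tail_intble f C') (tail_intble f C) fun ω => ?_
  exact Rmono' (max_le_max (by linarith) le_rfl)

omit [IsProbabilityMeasure μ] in
private lemma tail_eq_zero {f : Ω →ₘ[μ] ℝ} {c C : ℝ} (hb : ∀ᵐ ω ∂μ, |f ω| ≤ c) (hcC : c ≤ C) :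
    tailInt μ f C = 0 := by
  have h : (fun ω => min 1 (max (|f ω| - C) 0)) =ᵐ[μ] 0 := by
    filter_upwards [hb] with ω h
    have h2 : max (|f ω| - C) 0 = 0 := max_eq_right (by linarith)
    simp [h2]
  exact integral_eq_zero_of_ae h

private lemma tight_of {ε : ℝ} (hε : 0 < ε) (f : ℕ → Ω →ₘ[μ] ℝ) (g : ℕ → Ω → ℝ) (N : ℕ)
    (hb : ∀ m, ∃ c, ∀ᵐ ω ∂μ, |f m ω| ≤ c)
    (hgm : ∀ m, AEMeasurable (g m) μ)
    (hg0 : ∀ m, ∀ᵐ ω ∂μ, 0 ≤ g m ω)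
    (hae : ∀ m, N ≤ m → ∀ᵐ ω ∂μ, |f m ω| ≤ g m ω + |f N ω|)
    (hgi : ∀ m, N ≤ m → ∫ ω, min 1 (g m ω) ∂μ ≤ ε) :
    ∃ C, 1 ≤ C ∧ ∀ m, tailInt μ (f m) C ≤ ε := by
  choose c hc using hb
  set C : ℝ := 1 + ∑ m ∈ Finset.range (N + 1), |c m| with hCdef
  have hsum : (0:ℝ) ≤ ∑ m ∈ Finset.range (N + 1), |c m| :=
    Finset.sum_nonneg fun _ _ => abs_nonneg _
  have hC1 : 1 ≤ C := by simp only [hCdef]; linarith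
  have hCk : ∀ m ≤ N, c m ≤ C := by
    intro m hm
    have h1 : |c m| ≤ ∑ k ∈ Finset.range (N + 1), |c k| :=
      Finset.single_le_sum (fun k _ => abs_nonneg (c k))
        (Finset.mem_range.2 (Nat.lt_succ_of_le hm))
    calc c m ≤ |c m| := le_abs_self _
      _ ≤ C := by simp only [hCdef]; linarith
  refine ⟨C, hC1, fun m => ?_⟩
  rcases le_or_gt m N with hm | hm
  · rw [tail_eq_zero (hc m) (hCk m hm)]; exact hε.le
  · have key : tailInt μ (f m) C ≤ (∫ ω, min 1 (g m ω) ∂μ) + tailInt μ (f N) C := by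
      have h1 : Integrable (fun ω => min 1 (g m ω)) μ := int_min_one (hgm m) (hg0 m)
      have h2 := tail_intble (μ := μ) (f N) C
      have hpt : ∀ᵐ ω ∂μ, min 1 (max (|f m ω| - C) 0) ≤
          min 1 (g m ω) + min 1 (max (|f N ω| - C) 0) := by
        filter_upwards [hae m hm.le, hg0 m] with ω h h0
        exact R4' h h0
      have h3 := integral_mono_ae (tail_intble (f m) C) (h1.add h2) hpt
      simp only [Pi.add_apply] at h3
      rw [integral_add h1 h2] at h3
      exact h3
    have h0 : tailInt μ (f N) C = 0 := tail_eq_zero (hc N) (hCk N le_rfl)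
    rw [h0] at key
    simpa using key.trans (by simpa using hgi m hm.le)

end Helpers

section Main

variable [IsProbabilityMeasure μ]

private lemma dProb_nonneg (ξ η : Ω →ₘ[μ] ℝ) : 0 ≤ dProb μ ξ η :=
  integral_nonneg fun _ => le_min zero_le_one (abs_nonneg _)

private lemma dProb_intble (ξ η : Ω →ₘ[μ] ℝ) : Integrable (fun ω => min 1 |ξ ω - η ω|) μ :=
  int_min_one (am_abs (ξ.aemeasurable.sub η.aemeasurable))
    (Eventually.of_forall fun _ => abs_nonneg _)

omit [IsProbabilityMeasure μ] in
private lemma dProb_comm (ξ η : Ω →ₘ[μ] ℝ) : dProb μ ξ η = dProb μ η ξ := by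
  unfold dProb
  simp only [abs_sub_comm]

private lemma dProb_tri (ξ η ζ : Ω →ₘ[μ] ℝ) : dProb μ ξ η ≤ dProb μ ξ ζ + dProb μ ζ η := by
  have h1 := dProb_intble ξ ζ
  have h2 := dProb_intble ζ η
  have h3 := integral_mono (dProb_intble ξ η) (h1.add h2) (fun ω =>
    (Rmono' (abs_sub_le (ξ ω) (ζ ω) (η ω))).trans (R1' (abs_nonneg _) (abs_nonneg _)))
  simp only [Pi.add_apply] at h3
  rw [integral_add h1 h2] at h3
  exact h3

omit [IsProbabilityMeasure μ] in
private lemma coe_nonneg {f : Ω →ₘ[μ] ℝ} (h : 0 ≤ f) : ∀ᵐ ω ∂μ, 0 ≤ f ω := by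
  filter_upwards [AEEqFun.coeFn_le.mpr h, AEEqFun.coeFn_zero (β := ℝ) (μ := μ)] with ω h1 h2
  rw [h2] at h1
  exact h1

omit [IsProbabilityMeasure μ] in
private lemma ndist_nonneg {E : Type} [AddCommGroup E] (n : E → Ω →ₘ[μ] ℝ) (a b : E) :
    0 ≤ ndist μ n a b :=
  integral_nonneg fun _ => le_min zero_le_one (abs_nonneg _)

private lemma nd_intble {E : Type} [AddCommGroup E] (n : E → Ω →ₘ[μ] ℝ) (z : E) :
    Integrable (fun ω => min 1 |(n z) ω|) μ :=
  int_min_one (am_abs (n z).aemeasurable) (Eventually.of_forall fun _ => abs_nonneg _)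

/-- The key estimate. -/
private lemma main_bound {E : Type} [AddCommGroup E] [Module (Linf μ) E]
    (n : E → Ω →ₘ[μ] ℝ) (hn : IsLinfNorm μ n) (ξ η : Linf μ) (a b : E) {C : ℝ} (hC : 1 ≤ C) :
    ndist μ n (ξ • a) (η • b) ≤
      C * ndist μ n a b + tailInt μ (ξ : Ω →ₘ[μ] ℝ) C
      + (C * dProb μ (ξ : Ω →ₘ[μ] ℝ) (η : Ω →ₘ[μ] ℝ) + tailInt μ (n b) C) := by
  set ξ' : Ω →ₘ[μ] ℝ := (ξ : Ω →ₘ[μ] ℝ) with hξ'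
  set η' : Ω →ₘ[μ] ℝ := (η : Ω →ₘ[μ] ℝ) with hη'
  have hdecomp : ξ • a - η • b = ξ • (a - b) + (ξ - η) • b := by module
  have hB : n (ξ • a - η • b) ≤ |ξ'| * n (a - b) + |ξ' - η'| * n b := by
    rw [hdecomp]
    refine (hn.norm_add_le _ _).trans ?_
    rw [hn.norm_smul, hn.norm_smul]
    have hcoe : ((ξ - η : Linf μ) : Ω →ₘ[μ] ℝ) = ξ' - η' := rfl
    rw [hcoe]
  -- pointwise a.e. version
  have hptA : ∀ᵐ ω ∂μ, min 1 |(n (ξ • a - η • b)) ω| ≤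
      min 1 (|ξ' ω| * |(n (a - b)) ω|) + min 1 (|ξ' ω - η' ω| * |(n b) ω|) := by
    filter_upwards [AEEqFun.coeFn_le.mpr hB,
      AEEqFun.coeFn_add (|ξ'| * n (a - b)) (|ξ' - η'| * n b),
      AEEqFun.coeFn_mul |ξ'| (n (a - b)), AEEqFun.coeFn_mul |ξ' - η'| (n b),
      AEEqFun.coeFn_abs ξ', AEEqFun.coeFn_abs (ξ' - η'), AEEqFun.coeFn_sub ξ' η',
      coe_nonneg (hn.nonneg (ξ • a - η • b)), coe_nonneg (hn.nonneg (a - b)),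
      coe_nonneg (hn.nonneg b)] with ω h1 h2 h3 h4 h5 h6 h7 h8 h9 h10
    rw [h2, Pi.add_apply, h3, Pi.mul_apply, h4, Pi.mul_apply, h5, h6, h7, Pi.sub_apply] at h1
    rw [abs_of_nonneg h8, abs_of_nonneg h9, abs_of_nonneg h10]
    exact (Rmono' h1).trans (R1' (mul_nonneg (abs_nonneg _) h9) (mul_nonneg (abs_nonneg _) h10))
  have iA : Integrable (fun ω => min 1 (|ξ' ω| * |(n (a - b)) ω|)) μ :=
    int_min_one ((am_abs ξ'.aemeasurable).mul (am_abs (n (a - b)).aemeasurable))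
      (Eventually.of_forall fun _ => mul_nonneg (abs_nonneg _) (abs_nonneg _))
  have iB : Integrable (fun ω => min 1 (|ξ' ω - η' ω| * |(n b) ω|)) μ :=
    int_min_one ((am_abs (ξ'.aemeasurable.sub η'.aemeasurable)).mul
      (am_abs (n b).aemeasurable))
      (Eventually.of_forall fun _ => mul_nonneg (abs_nonneg _) (abs_nonneg _))
  have hD : ndist μ n (ξ • a) (η • b) ≤
      (∫ ω, min 1 (|ξ' ω| * |(n (a - b)) ω|) ∂μ)
      + ∫ ω, min 1 (|ξ' ω - η' ω| * |(n b) ω|) ∂μ := by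
    have h3 := integral_mono_ae (nd_intble n (ξ • a - η • b)) (iA.add iB) hptA
    simp only [Pi.add_apply] at h3
    rw [integral_add iA iB] at h3
    exact h3
  have hE : (∫ ω, min 1 (|ξ' ω| * |(n (a - b)) ω|) ∂μ) ≤
      C * ndist μ n a b + tailInt μ ξ' C := by
    have hint : Integrable (fun ω => C * min 1 |(n (a - b)) ω|) μ := (nd_intble n (a - b)).const_mul C
    have h3 := integral_mono iA (hint.add (tail_intble ξ' C)) (fun ω =>
      R2' hC (abs_nonneg ((n (a - b)) ω)))
    simp only [Pi.add_apply] at h3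
    rw [integral_add hint (tail_intble ξ' C), integral_const_mul C _] at h3
    exact h3
  have hF : (∫ ω, min 1 (|ξ' ω - η' ω| * |(n b) ω|) ∂μ) ≤
      C * dProb μ ξ' η' + tailInt μ (n b) C := by
    have hint : Integrable (fun ω => C * min 1 |ξ' ω - η' ω|) μ := (dProb_intble ξ' η').const_mul C
    have h3 := integral_mono iB (hint.add (tail_intble (n b) C)) (fun ω => by
      rw [mul_comm]
      exact R2' hC (abs_nonneg (ξ' ω - η' ω)))
    simp only [Pi.add_apply] at h3
    rw [integral_add hint (tail_intble (n b) C), integral_const_mul C _] at h3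
    exact h3
  linarith

private lemma tight_xi {ε : ℝ} (hε : 0 < ε) (ξ : ℕ → Linf μ) (ξ₀ : Ω →ₘ[μ] ℝ)
    (hξ : TendstoInProb μ (fun k => (ξ k : Ω →ₘ[μ] ℝ)) ξ₀) :
    ∃ C, 1 ≤ C ∧ ∀ k, tailInt μ (ξ k : Ω →ₘ[μ] ℝ) C ≤ ε := by
  obtain ⟨N, hN⟩ : ∃ N, ∀ k ≥ N, dProb μ (ξ k : Ω →ₘ[μ] ℝ) ξ₀ < ε / 2 :=
    eventually_atTop.mp (hξ.eventually (gt_mem_nhds (half_pos hε)))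
  refine tight_of hε (fun k => (ξ k : Ω →ₘ[μ] ℝ))
    (fun m ω => |(ξ m : Ω →ₘ[μ] ℝ) ω - (ξ N : Ω →ₘ[μ] ℝ) ω|) N
    (fun m => (ξ m).2) (fun m => am_abs ((ξ m : Ω →ₘ[μ] ℝ).aemeasurable.sub
      (ξ N : Ω →ₘ[μ] ℝ).aemeasurable))
    (fun m => Eventually.of_forall fun ω => abs_nonneg _)
    (fun m _ => Eventually.of_forall fun ω => by
      simpa using abs_add_le ((ξ m : Ω →ₘ[μ] ℝ) ω - (ξ N : Ω →ₘ[μ] ℝ) ω) ((ξ N : Ω →ₘ[μ] ℝ) ω))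
    (fun m hm => ?_)
  have h1 : (∫ ω, min 1 |(ξ m : Ω →ₘ[μ] ℝ) ω - (ξ N : Ω →ₘ[μ] ℝ) ω| ∂μ)
      = dProb μ (ξ m : Ω →ₘ[μ] ℝ) (ξ N : Ω →ₘ[μ] ℝ) := rfl
  rw [h1]
  calc dProb μ (ξ m : Ω →ₘ[μ] ℝ) (ξ N : Ω →ₘ[μ] ℝ)
      ≤ dProb μ (ξ m : Ω →ₘ[μ] ℝ) ξ₀ + dProb μ ξ₀ (ξ N : Ω →ₘ[μ] ℝ) := dProb_tri _ _ _
    _ = dProb μ (ξ m : Ω →ₘ[μ] ℝ) ξ₀ + dProb μ (ξ N : Ω →ₘ[μ] ℝ) ξ₀ := by rw [dProb_comm ξ₀ ((ξ N : Ω →ₘ[μ] ℝ))]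
    _ ≤ ε / 2 + ε / 2 := add_le_add (hN m hm).le (hN N le_rfl).le
    _ = ε := by ring

private lemma tight_x {ε : ℝ} (hε : 0 < ε) {E : Type} [AddCommGroup E] [Module (Linf μ) E]
    (n : E → Ω →ₘ[μ] ℝ) (hn : IsLinfNorm μ n) (x : ℕ → E) (hx : dCauchy (ndist μ n) x) :
    ∃ C, 1 ≤ C ∧ ∀ m, tailInt μ (n (x m)) C ≤ ε := by
  obtain ⟨N, hN⟩ := hx ε hε
  refine tight_of hε (fun m => n (x m)) (fun m ω => |(n (x m - x N)) ω|) N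
    (fun m => hn.mem_Linf (x m))
    (fun m => am_abs (n (x m - x N)).aemeasurable)
    (fun m => Eventually.of_forall fun ω => abs_nonneg _)
    (fun m hm => ?_) (fun m hm => (hN m hm N le_rfl).le)
  have hadd : n (x m) ≤ n (x m - x N) + n (x N) := by
    have h0 : x m = (x m - x N) + x N := by abel
    calc n (x m) = n ((x m - x N) + x N) := by rw [← h0]
      _ ≤ n (x m - x N) + n (x N) := hn.norm_add_le _ _
  filter_upwards [AEEqFun.coeFn_le.mpr hadd,
    AEEqFun.coeFn_add (n (x m - x N)) (n (x N)),
    coe_nonneg (hn.nonneg (x m))] with ω h1 h2 h3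
  rw [h2, Pi.add_apply] at h1
  rw [abs_of_nonneg h3]
  exact h1.trans (add_le_add (le_abs_self _) (le_abs_self _))

end Main
/-- if `{x_n}` is `d`-Cauchy in `E` and `{ξ_n} ⊆ L^∞` converges in
probability to `ξ ∈ L⁰`, then `{ξ_n x_n}` is `d`-Cauchy; moreover if `{η_n} ⊆ L^∞`
also converges in probability to `ξ` and `{y_n}` is `d`-Cauchy with `d(x_n,y_n) → 0`,
then `d(ξ_n x_n, η_n y_n) → 0`. -/
theorem cauchy_smul_of_tendstoInProb
    {Ω : Type} [MeasurableSpace Ω] (μ : Measure Ω) [IsProbabilityMeasure μ]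
    {E : Type} [AddCommGroup E] [Module (Linf μ) E]
    (n : E → Ω →ₘ[μ] ℝ) (hn : IsLinfNorm μ n)
    (x : ℕ → E) (hx : dCauchy (ndist μ n) x)
    (ξ : ℕ → Linf μ) (ξ₀ : Ω →ₘ[μ] ℝ)
    (hξ : TendstoInProb μ (fun k => (ξ k : Ω →ₘ[μ] ℝ)) ξ₀) :
    dCauchy (ndist μ n) (fun k => ξ k • x k) ∧
    (∀ (η : ℕ → Linf μ), TendstoInProb μ (fun k => (η k : Ω →ₘ[μ] ℝ)) ξ₀ →
      ∀ (y : ℕ → E), dCauchy (ndist μ n) y →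
        Tendsto (fun k => ndist μ n (x k) (y k)) atTop (nhds 0) →
        Tendsto (fun k => ndist μ n (ξ k • x k) (η k • y k)) atTop (nhds 0)) := by
  constructor
  · -- Cauchy part
    intro ε hε
    have hε5 : (0:ℝ) < ε / 5 := by linarith
    obtain ⟨C₁, hC₁, hT₁⟩ := tight_xi hε5 ξ ξ₀ hξ
    obtain ⟨C₂, hC₂, hT₂⟩ := tight_x hε5 n hn x hx
    set C := max C₁ C₂ with hCdef
    have hC : 1 ≤ C := hC₁.trans (le_max_left _ _)
    have hCpos : 0 < C := lt_of_lt_of_le one_pos hC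
    have hT₁' : ∀ k, tailInt μ (ξ k : Ω →ₘ[μ] ℝ) C ≤ ε / 5 :=
      fun k => (tail_mono_C _ (le_max_left _ _)).trans (hT₁ k)
    have hT₂' : ∀ m, tailInt μ (n (x m)) C ≤ ε / 5 :=
      fun m => (tail_mono_C _ (le_max_right _ _)).trans (hT₂ m)
    obtain ⟨N₁, hN₁⟩ := hx (ε / (5 * C)) (by positivity)
    obtain ⟨N₂, hN₂⟩ : ∃ N, ∀ k ≥ N, dProb μ (ξ k : Ω →ₘ[μ] ℝ) ξ₀ < ε / (10 * C) :=
      eventually_atTop.mp (hξ.eventually (gt_mem_nhds (by positivity)))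
    refine ⟨max N₁ N₂, fun m hm k hk => ?_⟩
    have hmb := main_bound n hn (ξ m) (ξ k) (x m) (x k) hC
    have h1 : ndist μ n (x m) (x k) < ε / (5 * C) :=
      hN₁ m (le_trans (le_max_left _ _) hm) k (le_trans (le_max_left _ _) hk)
    have h2 : dProb μ (ξ m : Ω →ₘ[μ] ℝ) (ξ k : Ω →ₘ[μ] ℝ) < ε / (5 * C) := by
      calc dProb μ (ξ m : Ω →ₘ[μ] ℝ) (ξ k : Ω →ₘ[μ] ℝ)
          ≤ dProb μ (ξ m : Ω →ₘ[μ] ℝ) ξ₀ + dProb μ ξ₀ (ξ k : Ω →ₘ[μ] ℝ) := dProb_tri _ _ _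
        _ = dProb μ (ξ m : Ω →ₘ[μ] ℝ) ξ₀ + dProb μ (ξ k : Ω →ₘ[μ] ℝ) ξ₀ := by
            rw [dProb_comm ξ₀ ((ξ k : Ω →ₘ[μ] ℝ))]
        _ < ε / (10 * C) + ε / (10 * C) :=
            add_lt_add (hN₂ m (le_trans (le_max_right _ _) hm))
              (hN₂ k (le_trans (le_max_right _ _) hk))
        _ = ε / (5 * C) := by field_simp; ring
    have e : C * (ε / (5 * C)) = ε / 5 := by field_simp
    have hA : C * ndist μ n (x m) (x k) ≤ ε / 5 :=
      (mul_le_mul_of_nonneg_left h1.le hCpos.le).trans_eq e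
    have hB : C * dProb μ (ξ m : Ω →ₘ[μ] ℝ) (ξ k : Ω →ₘ[μ] ℝ) ≤ ε / 5 :=
      (mul_le_mul_of_nonneg_left h2.le hCpos.le).trans_eq e
    have := hT₁' m
    have := hT₂' k
    simp only [ge_iff_le] at *
    linarith
  · -- convergence part
    intro η hη y hy hxy
    refine NormedAddCommGroup.tendsto_nhds_zero.mpr fun ε hε => ?_
    have hε5 : (0:ℝ) < ε / 5 := by linarith
    obtain ⟨C₁, hC₁, hT₁⟩ := tight_xi hε5 ξ ξ₀ hξ
    obtain ⟨C₂, hC₂, hT₂⟩ := tight_x hε5 n hn y hy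
    set C := max C₁ C₂ with hCdef
    have hC : 1 ≤ C := hC₁.trans (le_max_left _ _)
    have hCpos : 0 < C := lt_of_lt_of_le one_pos hC
    have hT₁' : ∀ k, tailInt μ (ξ k : Ω →ₘ[μ] ℝ) C ≤ ε / 5 :=
      fun k => (tail_mono_C _ (le_max_left _ _)).trans (hT₁ k)
    have hT₂' : ∀ m, tailInt μ (n (y m)) C ≤ ε / 5 :=
      fun m => (tail_mono_C _ (le_max_right _ _)).trans (hT₂ m)
    have h1 : ∀ᶠ k in atTop, ndist μ n (x k) (y k) < ε / (5 * C) :=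
      hxy.eventually (gt_mem_nhds (by positivity))
    have h2 : ∀ᶠ k in atTop, dProb μ (ξ k : Ω →ₘ[μ] ℝ) ξ₀ < ε / (10 * C) :=
      hξ.eventually (gt_mem_nhds (by positivity))
    have h3 : ∀ᶠ k in atTop, dProb μ (η k : Ω →ₘ[μ] ℝ) ξ₀ < ε / (10 * C) :=
      hη.eventually (gt_mem_nhds (by positivity))
    filter_upwards [h1, h2, h3] with k hk1 hk2 hk3
    rw [Real.norm_eq_abs, abs_of_nonneg (ndist_nonneg n _ _)]
    have hmb := main_bound n hn (ξ k) (η k) (x k) (y k) hC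
    have hd : dProb μ (ξ k : Ω →ₘ[μ] ℝ) (η k : Ω →ₘ[μ] ℝ) < ε / (5 * C) := by
      calc dProb μ (ξ k : Ω →ₘ[μ] ℝ) (η k : Ω →ₘ[μ] ℝ)
          ≤ dProb μ (ξ k : Ω →ₘ[μ] ℝ) ξ₀ + dProb μ ξ₀ (η k : Ω →ₘ[μ] ℝ) := dProb_tri _ _ _
        _ = dProb μ (ξ k : Ω →ₘ[μ] ℝ) ξ₀ + dProb μ (η k : Ω →ₘ[μ] ℝ) ξ₀ := by
            rw [dProb_comm ξ₀ ((η k : Ω →ₘ[μ] ℝ))]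
        _ < ε / (10 * C) + ε / (10 * C) := add_lt_add hk2 hk3
        _ = ε / (5 * C) := by field_simp; ring
    have e : C * (ε / (5 * C)) = ε / 5 := by field_simp
    have hA : C * ndist μ n (x k) (y k) ≤ ε / 5 :=
      (mul_le_mul_of_nonneg_left hk1.le hCpos.le).trans_eq e
    have hB : C * dProb μ (ξ k : Ω →ₘ[μ] ℝ) (η k : Ω →ₘ[μ] ℝ) ≤ ε / 5 :=
      (mul_le_mul_of_nonneg_left hd.le hCpos.le).trans_eq e
    have := hT₁' k
    have := hT₂' k
    linarith

end
end

section
/- For every L^∞-normed module (E, ‖·‖) there exists a complete random normed module (E_0, ‖·‖_0) over L^0 and an L^∞-module homomorphism T : E → E_0 such that ‖T(x)‖_0 = ‖x‖ for all x ∈ E and T(E) is dense in E_0 with respect to the topology of convergence in probability of the L^0-norm. -/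
open MeasureTheory Filter
noncomputable section

variable {Ω : Type} [MeasurableSpace Ω] {μ : Measure Ω}

namespace L0Ext

open UniformSpace

variable {Ω : Type} [MeasurableSpace Ω] {μ : Measure Ω}

theorem min_one_nonneg {a : ℝ} (ha : 0 ≤ a) : 0 ≤ min 1 a := le_min zero_le_one ha

theorem min_one_add_le {a b c : ℝ} (hb : 0 ≤ b) (hc : 0 ≤ c) (h : a ≤ b + c) :
    min 1 a ≤ min 1 b + min 1 c := by
  rcases le_or_gt 1 b with hb1 | hb1
  · calc min 1 a ≤ 1 := min_le_left _ _
      _ = min 1 b := (min_eq_left hb1).symm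
      _ ≤ min 1 b + min 1 c := le_add_of_nonneg_right (min_one_nonneg hc)
  rcases le_or_gt 1 c with hc1 | hc1
  · calc min 1 a ≤ 1 := min_le_left _ _
      _ = min 1 c := (min_eq_left hc1).symm
      _ ≤ min 1 b + min 1 c := le_add_of_nonneg_left (min_one_nonneg hb)
  · calc min 1 a ≤ a := min_le_right _ _
      _ ≤ b + c := h
      _ = min 1 b + min 1 c := by rw [min_eq_right hb1.le, min_eq_right hc1.le]

theorem min_one_mul_le {a t : ℝ} (ha : 0 ≤ a) (ht : 0 ≤ t) :
    min 1 (a * t) ≤ max a 1 * min 1 t := by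
  rcases le_or_gt 1 t with ht1 | ht1
  · rw [min_eq_left ht1]
    calc min 1 (a * t) ≤ 1 := min_le_left _ _
      _ ≤ max a 1 * 1 := by simpa using le_max_right a 1
  · rw [min_eq_right ht1.le]
    calc min 1 (a * t) ≤ a * t := min_le_right _ _
      _ ≤ max a 1 * t := mul_le_mul_of_nonneg_right (le_max_left _ _) ht

theorem integrable_min_one [IsFiniteMeasure μ] {f : Ω → ℝ} (hf : AEStronglyMeasurable f μ) :
    Integrable (fun ω => min 1 |f ω|) μ := by
  refine Integrable.mono' (integrable_const 1) ?_ ?_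
  · exact (continuous_const.min continuous_abs).comp_aestronglyMeasurable hf
  · refine Filter.Eventually.of_forall fun ω => ?_
    rw [Real.norm_eq_abs, abs_of_nonneg (min_one_nonneg (abs_nonneg _))]
    exact min_le_left _ _

/-- the basic functional `φ(ξ) = E[1 ∧ |ξ|]`. -/
def phi (μ : Measure Ω) (ξ : Ω →ₘ[μ] ℝ) : ℝ := ∫ ω, min 1 |ξ ω| ∂μ

theorem phi_congr_fun {ξ : Ω →ₘ[μ] ℝ} {f : Ω → ℝ} (h : ⇑ξ =ᵐ[μ] f) :
    phi μ ξ = ∫ ω, min 1 |f ω| ∂μ :=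
  integral_congr_ae (h.mono fun ω hω => by simp only []; rw [hω])

theorem phi_nonneg (ξ : Ω →ₘ[μ] ℝ) : 0 ≤ phi μ ξ :=
  integral_nonneg fun ω => min_one_nonneg (abs_nonneg _)

theorem phi_zero : phi μ (0 : Ω →ₘ[μ] ℝ) = 0 := by
  rw [phi_congr_fun (AEEqFun.coeFn_zero (β := ℝ))]
  simp

theorem phi_mono [IsFiniteMeasure μ] {ξ η : Ω →ₘ[μ] ℝ} (h : ∀ᵐ ω ∂μ, |ξ ω| ≤ |η ω|) :
    phi μ ξ ≤ phi μ η := by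
  refine integral_mono_ae (integrable_min_one ξ.aestronglyMeasurable)
    (integrable_min_one η.aestronglyMeasurable) ?_
  filter_upwards [h] with ω hω
  exact min_le_min le_rfl hω

theorem phi_eq_zero_iff [IsProbabilityMeasure μ] {ξ : Ω →ₘ[μ] ℝ} :
    phi μ ξ = 0 ↔ ξ = 0 := by
  constructor
  · intro h
    have hi : Integrable (fun ω => min 1 |ξ ω|) μ := integrable_min_one ξ.aestronglyMeasurable
    have h0 : (fun ω => min 1 |ξ ω|) =ᵐ[μ] 0 :=
      (integral_eq_zero_iff_of_nonneg (fun ω => min_one_nonneg (abs_nonneg _)) hi).mp h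
    refine AEEqFun.ext ?_
    filter_upwards [h0, AEEqFun.coeFn_zero (β := ℝ) (μ := μ)] with ω h1 h2
    rw [h2]
    by_contra hne
    have habs : 0 < |ξ ω| := abs_pos.mpr hne
    have : 0 < min 1 |ξ ω| := lt_min one_pos habs
    simp only [Pi.zero_apply] at h1
    exact this.ne' h1
  · rintro rfl; exact phi_zero

theorem phi_add_le [IsFiniteMeasure μ] (ξ η : Ω →ₘ[μ] ℝ) :
    phi μ (ξ + η) ≤ phi μ ξ + phi μ η := by
  rw [phi_congr_fun (AEEqFun.coeFn_add ξ η)]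
  calc ∫ ω, min 1 |ξ ω + η ω| ∂μ
      ≤ ∫ ω, (min 1 |ξ ω| + min 1 |η ω|) ∂μ := by
        refine integral_mono_ae ?_ ?_ (Filter.Eventually.of_forall fun ω => ?_)
        · refine (integrable_min_one ?_)
          exact ξ.aestronglyMeasurable.add η.aestronglyMeasurable |>.congr
            (Filter.Eventually.of_forall fun ω => rfl)
        · exact (integrable_min_one ξ.aestronglyMeasurable).add
            (integrable_min_one η.aestronglyMeasurable)
        · exact min_one_add_le (abs_nonneg _) (abs_nonneg _) (abs_add_le _ _)
    _ = phi μ ξ + phi μ η := integral_add (integrable_min_one ξ.aestronglyMeasurable)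
        (integrable_min_one η.aestronglyMeasurable)

theorem phi_neg (ξ : Ω →ₘ[μ] ℝ) : phi μ (-ξ) = phi μ ξ := by
  rw [phi_congr_fun (AEEqFun.coeFn_neg ξ)]
  exact integral_congr_ae (Filter.Eventually.of_forall fun ω => by simp)

theorem phi_sub_le [IsFiniteMeasure μ] (ξ η : Ω →ₘ[μ] ℝ) :
    phi μ (ξ - η) ≤ phi μ ξ + phi μ η := by
  rw [sub_eq_add_neg]
  exact (phi_add_le ξ (-η)).trans (by rw [phi_neg])

/-- the metric of convergence in probability on `L⁰`. -/
instance l0MetricSpace [IsProbabilityMeasure μ] : MetricSpace (Ω →ₘ[μ] ℝ) where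
  dist ξ η := phi μ (ξ - η)
  dist_self ξ := by simp [sub_self, phi_zero]
  dist_comm ξ η := by
    have : η - ξ = -(ξ - η) := by ring
    simp only [this, phi_neg]
  dist_triangle ξ η ζ := by
    have h : ξ - ζ = (ξ - η) + (η - ζ) := by ring
    simpa only [h] using phi_add_le (ξ - η) (η - ζ)
  eq_of_dist_eq_zero h := sub_eq_zero.mp (phi_eq_zero_iff.mp h)

theorem l0dist_def [IsProbabilityMeasure μ] (ξ η : Ω →ₘ[μ] ℝ) :
    dist ξ η = phi μ (ξ - η) := rfl

end L0Ext
namespace L0Ext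

variable {Ω : Type} [MeasurableSpace Ω] {μ : Measure Ω}

theorem phi_le_measure [IsProbabilityMeasure μ] {ξ : Ω →ₘ[μ] ℝ} {s : Set Ω}
    (hs : MeasurableSet s) (h : ∀ᵐ ω ∂μ, ω ∉ s → ξ ω = 0) :
    phi μ ξ ≤ (μ s).toReal := by
  have hle : phi μ ξ ≤ ∫ ω, s.indicator (fun _ => (1:ℝ)) ω ∂μ := by
    refine integral_mono_ae (integrable_min_one ξ.aestronglyMeasurable)
      ((integrable_const 1).indicator hs) ?_
    filter_upwards [h] with ω hω
    by_cases hmem : ω ∈ s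
    · rw [Set.indicator_of_mem hmem]; exact min_le_left _ _
    · rw [Set.indicator_of_notMem hmem, hω hmem]; simp
  rw [integral_indicator_const (1:ℝ) hs] at hle
  simp at hle; exact hle

theorem mul_measure_le_phi [IsProbabilityMeasure μ] {ξ : Ω →ₘ[μ] ℝ} {ε : ℝ}
    (hε : 0 < ε) (hε1 : ε ≤ 1) :
    ε * (μ {ω | ε < |ξ ω|}).toReal ≤ phi μ ξ := by
  set s := {ω | ε < |ξ ω|} with hs_def
  have hs : MeasurableSet s := measurableSet_lt measurable_const ξ.measurable.abs
  have hle : ∫ ω, s.indicator (fun _ => ε) ω ∂μ ≤ phi μ ξ := by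
    refine integral_mono_ae ((integrable_const ε).indicator hs)
      (integrable_min_one ξ.aestronglyMeasurable)
      (Filter.Eventually.of_forall fun ω => ?_)
    by_cases hmem : ω ∈ s
    · rw [Set.indicator_of_mem hmem]
      exact le_min hε1 (le_of_lt hmem)
    · rw [Set.indicator_of_notMem hmem]
      exact min_one_nonneg (abs_nonneg _)
  rw [integral_indicator_const ε hs, smul_eq_mul, mul_comm] at hle
  exact hle

theorem measure_gt_le [IsProbabilityMeasure μ] {ξ : Ω →ₘ[μ] ℝ} {ε : ℝ}
    (hε : 0 < ε) (hε1 : ε ≤ 1) :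
    μ {ω | ε < |ξ ω|} ≤ ENNReal.ofReal (phi μ ξ / ε) := by
  rw [ENNReal.le_ofReal_iff_toReal_le (measure_ne_top μ _)
    (div_nonneg (phi_nonneg ξ) hε.le), le_div_iff₀ hε, mul_comm]
  exact mul_measure_le_phi hε hε1

/-- the positive cone of `L⁰` is closed in probability. -/
theorem isClosed_nonneg [IsProbabilityMeasure μ] :
    IsClosed {ξ : Ω →ₘ[μ] ℝ | 0 ≤ ξ} := by
  refine IsSeqClosed.isClosed fun x ξ hx hlim => ?_
  have key : ∫ ω, min 1 |min (ξ ω) 0| ∂μ = 0 := by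
    have hsm : AEStronglyMeasurable (fun ω => min (ξ ω) 0) μ :=
      (continuous_id.min continuous_const).comp_aestronglyMeasurable ξ.aestronglyMeasurable
    have hnonneg : 0 ≤ ∫ ω, min 1 |min (ξ ω) 0| ∂μ :=
      integral_nonneg fun ω => min_one_nonneg (abs_nonneg _)
    have hbound : ∀ k, ∫ ω, min 1 |min (ξ ω) 0| ∂μ ≤ dist (x k) ξ := by
      intro k
      rw [dist_comm, l0dist_def]
      refine integral_mono_ae (integrable_min_one hsm)
        (integrable_min_one (ξ - x k).aestronglyMeasurable) ?_
      have hxk : (0:Ω →ₘ[μ] ℝ) ≤ x k := hx k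
      rw [← AEEqFun.coeFn_le] at hxk
      filter_upwards [hxk, AEEqFun.coeFn_sub ξ (x k),
        AEEqFun.coeFn_zero (β := ℝ) (μ := μ)] with ω h1 h2 h3
      rw [h3, Pi.zero_apply] at h1
      refine min_le_min le_rfl ?_
      rw [h2, Pi.sub_apply]
      rcases le_or_gt 0 (ξ ω) with hpos | hneg
      · simp [min_eq_right, hpos, abs_nonneg]
      · rw [min_eq_left hneg.le, abs_of_neg hneg, abs_of_nonpos (by linarith), neg_sub]
        linarith
    have : Filter.Tendsto (fun k => dist (x k) ξ) Filter.atTop (nhds 0) :=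
      tendsto_iff_dist_tendsto_zero.mp hlim
    exact le_antisymm (ge_of_tendsto this (Filter.Eventually.of_forall hbound)) hnonneg
  have h0 : (fun ω => min 1 |min (ξ ω) 0|) =ᵐ[μ] 0 :=
    (integral_eq_zero_iff_of_nonneg (fun ω => min_one_nonneg (abs_nonneg _))
      (integrable_min_one ((continuous_id.min continuous_const).comp_aestronglyMeasurable
        ξ.aestronglyMeasurable))).mp key
  rw [Set.mem_setOf_eq, ← AEEqFun.coeFn_le]
  filter_upwards [h0, AEEqFun.coeFn_zero (β := ℝ) (μ := μ)] with ω h1 h2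
  rw [h2, Pi.zero_apply]
  simp only [Pi.zero_apply] at h1
  by_contra hneg
  push_neg at hneg
  have : 0 < min 1 |min (ξ ω) 0| := by
    refine lt_min one_pos (abs_pos.mpr ?_)
    rw [min_eq_left hneg.le]
    exact hneg.ne
  exact this.ne' h1

/-- `L⁰` is complete in probability. -/
instance l0Complete [IsProbabilityMeasure μ] : CompleteSpace (Ω →ₘ[μ] ℝ) := by
  refine Metric.complete_of_cauchySeq_tendsto fun u hu => ?_
  have hV : ∀ k : ℕ, {p : (Ω →ₘ[μ] ℝ) × (Ω →ₘ[μ] ℝ) | dist p.1 p.2 < (1/4:ℝ)^(k+1)} ∈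
      uniformity (Ω →ₘ[μ] ℝ) := fun k => Metric.dist_mem_uniformity (by positivity)
  obtain ⟨i, hmono, hi⟩ := hu.subseq_mem hV
  set v : ℕ → Ω →ₘ[μ] ℝ := fun k => u (i k) with hv_def
  have hdist : ∀ k, dist (v (k+1)) (v k) < (1/4:ℝ)^(k+1) := fun k => hi k
  -- bad sets
  set G : ℕ → Set Ω := fun k => {ω | (1/2:ℝ)^(k+1) < |(v (k+1) - v k) ω|} with hG_def
  have hGm : ∀ k, μ (G k) ≤ ENNReal.ofReal ((1/2:ℝ)^(k+1)) := by
    intro k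
    refine (measure_gt_le (by positivity) (by
      calc (1/2:ℝ)^(k+1) ≤ (1/2:ℝ)^0 := by
            refine pow_le_pow_of_le_one (by norm_num) (by norm_num) (Nat.zero_le _)
        _ = 1 := pow_zero _)).trans ?_
    refine ENNReal.ofReal_le_ofReal ?_
    rw [div_le_iff₀ (by positivity)]
    calc phi μ (v (k+1) - v k) ≤ (1/4:ℝ)^(k+1) := (hdist k).le
      _ = (1/2:ℝ)^(k+1) * (1/2:ℝ)^(k+1) := by
          rw [← mul_pow]; norm_num
  have hsum : (∑' k, μ (G k)) ≠ ⊤ := by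
    have h1 : Summable fun k : ℕ => (1/2:ℝ)^(k+1) := by
      simpa [pow_succ] using summable_geometric_two.mul_right (1/2:ℝ)
    have hcalc : (∑' k, μ (G k)) ≤ ENNReal.ofReal (∑' k, (1/2:ℝ)^(k+1)) := by
      calc (∑' k, μ (G k)) ≤ ∑' k, ENNReal.ofReal ((1/2:ℝ)^(k+1)) := ENNReal.tsum_le_tsum hGm
        _ = ENNReal.ofReal (∑' k, (1/2:ℝ)^(k+1)) :=
            (ENNReal.ofReal_tsum_of_nonneg (fun k => by positivity) h1).symm
    exact (hcalc.trans_lt ENNReal.ofReal_lt_top).ne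
  have hBC : ∀ᵐ ω ∂μ, ∀ᶠ k in Filter.atTop, ω ∉ G k := ae_eventually_notMem hsum
  have hsub : ∀ᵐ ω ∂μ, ∀ k, (v (k+1) - v k) ω = v (k+1) ω - v k ω :=
    MeasureTheory.ae_all_iff.mpr fun k => AEEqFun.coeFn_sub (v (k+1)) (v k)
  have h_ae : ∀ᵐ ω ∂μ, ∃ l : ℝ, Filter.Tendsto (fun k => v k ω) Filter.atTop (nhds l) := by
    filter_upwards [hBC, hsub] with ω h1 h2
    obtain ⟨K, hK⟩ := Filter.eventually_atTop.mp h1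
    have hc : CauchySeq (fun m => v (K + m) ω) := by
      refine cauchySeq_of_le_geometric (1/2:ℝ) ((1/2:ℝ)^(K+1)) (by norm_num) fun m => ?_
      have hm := hK (K + m) (Nat.le_add_right _ _)
      rw [hG_def, Set.mem_setOf_eq, not_lt] at hm
      have hKm : K + (m+1) = (K+m)+1 := rfl
      rw [Real.dist_eq, hKm]
      calc |v (K+m) ω - v ((K+m)+1) ω| = |(v (K+m+1) - v (K+m)) ω| := by
            rw [h2 (K+m)]; exact abs_sub_comm _ _
        _ ≤ (1/2:ℝ)^(K+m+1) := hm
        _ = (1/2:ℝ)^(K+1) * (1/2:ℝ)^m := by ring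
    obtain ⟨l, hl⟩ := cauchySeq_tendsto_of_complete hc
    refine ⟨l, (Filter.tendsto_add_atTop_iff_nat (f := fun k => v k ω) (l := nhds l) K).mp ?_⟩
    convert hl using 2 with m
    rw [Nat.add_comm]
  obtain ⟨flim, hflim_meas, hflim⟩ := measurable_limit_of_tendsto_metrizable_ae
    (f := fun k (ω : Ω) => v k ω) (fun k => (v k).aemeasurable) h_ae
  set ξ : Ω →ₘ[μ] ℝ := AEEqFun.mk flim hflim_meas.aestronglyMeasurable with hξ_def
  have hconv : Filter.Tendsto v Filter.atTop (nhds ξ) := by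
    rw [tendsto_iff_dist_tendsto_zero]
    have heq : ∀ k, dist (v k) ξ = ∫ ω, min 1 |v k ω - flim ω| ∂μ := by
      intro k
      rw [l0dist_def]
      refine phi_congr_fun ?_
      filter_upwards [AEEqFun.coeFn_sub (v k) ξ, AEEqFun.coeFn_mk flim
        hflim_meas.aestronglyMeasurable] with ω h1 h2
      rw [h1, Pi.sub_apply, hξ_def, h2]
    simp only [heq]
    have h0 : (0:ℝ) = ∫ (_ : Ω), (0:ℝ) ∂μ := by simp
    rw [h0]
    refine tendsto_integral_of_dominated_convergence (fun _ => (1:ℝ)) ?_ (integrable_const 1)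
      ?_ ?_
    · intro k
      have hsm : AEStronglyMeasurable (fun ω => (v k) ω - flim ω) μ :=
        (v k).aestronglyMeasurable.sub hflim_meas.aestronglyMeasurable
      exact (continuous_const.min continuous_abs).comp_aestronglyMeasurable hsm
    · intro k
      refine Filter.Eventually.of_forall fun ω => ?_
      rw [Real.norm_eq_abs, abs_of_nonneg (min_one_nonneg (abs_nonneg _))]
      exact min_le_left _ _
    · filter_upwards [hflim] with ω hω
      have : Filter.Tendsto (fun k => v k ω - flim ω) Filter.atTop (nhds 0) := by
        have h' : Filter.Tendsto (fun k => v k ω - flim ω) Filter.atTop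
            (nhds (flim ω - flim ω)) := hω.sub tendsto_const_nhds
        rwa [sub_self] at h'
      have habs : Filter.Tendsto (fun k => |v k ω - flim ω|) Filter.atTop (nhds 0) := by
        simpa using this.abs
      have hcont : Filter.Tendsto (fun t : ℝ => min 1 |t|) (nhds 0) (nhds (min 1 |(0:ℝ)|)) :=
        (continuous_const.min continuous_abs).tendsto 0
      have := hcont.comp this
      simpa [Function.comp_def] using this
  exact ⟨ξ, tendsto_nhds_of_cauchySeq_of_subseq hu hmono.tendsto_atTop hconv⟩

end L0Ext
namespace L0Ext

variable {Ω : Type} [MeasurableSpace Ω] {μ : Measure Ω}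

theorem l0_le_iff_sub_nonneg {ξ η : Ω →ₘ[μ] ℝ} : ξ ≤ η ↔ 0 ≤ η - ξ := by
  constructor
  · intro h
    rw [← AEEqFun.coeFn_le] at h ⊢
    filter_upwards [h, AEEqFun.coeFn_sub η ξ, AEEqFun.coeFn_zero (β := ℝ) (μ := μ)]
      with ω h1 h2 h3
    rw [h2, h3, Pi.sub_apply, Pi.zero_apply]
    linarith
  · intro h
    rw [← AEEqFun.coeFn_le] at h ⊢
    filter_upwards [h, AEEqFun.coeFn_sub η ξ, AEEqFun.coeFn_zero (β := ℝ) (μ := μ)]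
      with ω h1 h2 h3
    rw [h3, Pi.zero_apply, h2, Pi.sub_apply] at h1
    linarith

theorem lipschitzWith_sub [IsProbabilityMeasure μ] :
    LipschitzWith 2 (fun p : (Ω →ₘ[μ] ℝ) × (Ω →ₘ[μ] ℝ) => p.1 - p.2) := by
  refine LipschitzWith.of_dist_le_mul fun p q => ?_
  have h : p.1 - p.2 - (q.1 - q.2) = (p.1 - q.1) - (p.2 - q.2) := by ring
  have hcalc : dist (p.1 - p.2) (q.1 - q.2) ≤ dist p.1 q.1 + dist p.2 q.2 := by
    calc dist (p.1 - p.2) (q.1 - q.2) = phi μ ((p.1 - q.1) - (p.2 - q.2)) := by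
          rw [l0dist_def, h]
      _ ≤ phi μ (p.1 - q.1) + phi μ (p.2 - q.2) := phi_sub_le _ _
      _ = dist p.1 q.1 + dist p.2 q.2 := rfl
  refine hcalc.trans ?_
  rw [Prod.dist_eq]
  have h1 : dist p.1 q.1 ≤ max (dist p.1 q.1) (dist p.2 q.2) := le_max_left _ _
  have h2 : dist p.2 q.2 ≤ max (dist p.1 q.1) (dist p.2 q.2) := le_max_right _ _
  push_cast
  linarith

theorem isClosed_le_l0 [IsProbabilityMeasure μ] :
    IsClosed {p : (Ω →ₘ[μ] ℝ) × (Ω →ₘ[μ] ℝ) | p.1 ≤ p.2} := by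
  have heq : {p : (Ω →ₘ[μ] ℝ) × (Ω →ₘ[μ] ℝ) | p.1 ≤ p.2} =
      (fun p : (Ω →ₘ[μ] ℝ) × (Ω →ₘ[μ] ℝ) => p.2 - p.1) ⁻¹' {ξ | 0 ≤ ξ} := by
    ext p
    exact l0_le_iff_sub_nonneg
  rw [heq]
  exact IsClosed.preimage
    (lipschitzWith_sub.continuous.comp (continuous_snd.prodMk continuous_fst))
    isClosed_nonneg

theorem dist_mul_le [IsProbabilityMeasure μ] {α : Ω →ₘ[μ] ℝ} {c : ℝ}
    (hc : ∀ᵐ ω ∂μ, |α ω| ≤ c) (u v : Ω →ₘ[μ] ℝ) :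
    dist (α * u) (α * v) ≤ max c 1 * dist u v := by
  have hc0 : 0 ≤ c := by
    obtain ⟨ω, hω⟩ := hc.exists
    exact (abs_nonneg _).trans hω
  have h : α * u - α * v = α * (u - v) := by ring
  rw [l0dist_def, l0dist_def, h]
  calc phi μ (α * (u - v)) ≤ ∫ ω, max c 1 * min 1 |(u - v) ω| ∂μ := by
        refine integral_mono_ae (integrable_min_one (α * (u - v)).aestronglyMeasurable) ?_ ?_
        · exact (integrable_min_one (u - v).aestronglyMeasurable).const_mul _
        · filter_upwards [hc, AEEqFun.coeFn_mul α (u - v)] with ω h1 h2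
          calc min 1 |(α * (u - v)) ω| = min 1 |α ω * (u - v) ω| := by rw [h2]; rfl
            _ ≤ min 1 (c * |(u - v) ω|) := by
                refine min_le_min le_rfl ?_
                rw [abs_mul]
                exact mul_le_mul_of_nonneg_right h1 (abs_nonneg _)
            _ ≤ max c 1 * min 1 |(u - v) ω| := min_one_mul_le hc0 (abs_nonneg _)
    _ = max c 1 * phi μ (u - v) := integral_const_mul _ _

theorem continuous_mul_bounded [IsProbabilityMeasure μ] {α : Ω →ₘ[μ] ℝ} {c : ℝ}
    (hc : ∀ᵐ ω ∂μ, |α ω| ≤ c) : Continuous (fun ξ : Ω →ₘ[μ] ℝ => α * ξ) := by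
  have h0 : (0:ℝ) ≤ max c 1 := zero_le_one.trans (le_max_right _ _)
  refine LipschitzWith.continuous (K := Real.toNNReal (max c 1))
    (LipschitzWith.of_dist_le_mul fun u v => ?_)
  rw [Real.coe_toNNReal _ h0]
  exact dist_mul_le hc u v

section E

variable {E : Type} [AddCommGroup E] [Module (Linf μ) E]

theorem linf_coe_neg_one : ((-1 : Linf μ) : Ω →ₘ[μ] ℝ) = -1 := rfl

theorem abs_neg_one_l0 : |(-1 : Ω →ₘ[μ] ℝ)| = 1 := by
  refine AEEqFun.ext ?_
  filter_upwards [AEEqFun.coeFn_abs (-1 : Ω →ₘ[μ] ℝ), AEEqFun.coeFn_neg (1 : Ω →ₘ[μ] ℝ),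
    AEEqFun.coeFn_one (β := ℝ) (μ := μ)] with ω h1 h2 h3
  rw [h1, h2, Pi.neg_apply, h3, Pi.one_apply]
  norm_num

theorem _root_.IsLinfNorm.n_zero {n : E → Ω →ₘ[μ] ℝ} (hn : IsLinfNorm μ n) : n 0 = 0 :=
  (hn.eq_zero_iff 0).mpr rfl

theorem _root_.IsLinfNorm.n_neg {n : E → Ω →ₘ[μ] ℝ} (hn : IsLinfNorm μ n) (x : E) :
    n (-x) = n x := by
  have h : (-x : E) = ((-1 : Linf μ)) • x := (neg_one_smul (Linf μ) x).symm
  rw [h, hn.norm_smul, linf_coe_neg_one, abs_neg_one_l0, one_mul]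

theorem _root_.IsLinfNorm.n_sub_rev {n : E → Ω →ₘ[μ] ℝ} (hn : IsLinfNorm μ n) (x y : E) :
    n (x - y) = n (y - x) := by
  rw [← hn.n_neg (y - x), neg_sub]

theorem _root_.IsLinfNorm.ae_nonneg {n : E → Ω →ₘ[μ] ℝ} (hn : IsLinfNorm μ n) (x : E) :
    ∀ᵐ ω ∂μ, 0 ≤ n x ω := by
  have h := hn.nonneg x
  rw [← AEEqFun.coeFn_le] at h
  filter_upwards [h, AEEqFun.coeFn_zero (β := ℝ) (μ := μ)] with ω h1 h2
  rw [h2, Pi.zero_apply] at h1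
  exact h1

/-- pointwise a.e. triangle inequality for the norm. -/
theorem _root_.IsLinfNorm.ae_add_le {n : E → Ω →ₘ[μ] ℝ} (hn : IsLinfNorm μ n) (u v : E) :
    ∀ᵐ ω ∂μ, n (u + v) ω ≤ n u ω + n v ω := by
  have h := hn.norm_add_le u v
  rw [← AEEqFun.coeFn_le] at h
  filter_upwards [h, AEEqFun.coeFn_add (n u) (n v)] with ω h1 h2
  rw [h2, Pi.add_apply] at h1
  exact h1

theorem _root_.IsLinfNorm.phi_add_le' [IsProbabilityMeasure μ] {n : E → Ω →ₘ[μ] ℝ}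
    (hn : IsLinfNorm μ n) (u v : E) :
    phi μ (n (u + v)) ≤ phi μ (n u) + phi μ (n v) := by
  calc phi μ (n (u + v)) ≤ ∫ ω, (min 1 |n u ω| + min 1 |n v ω|) ∂μ := by
        refine integral_mono_ae (integrable_min_one (n (u+v)).aestronglyMeasurable)
          ((integrable_min_one (n u).aestronglyMeasurable).add
            (integrable_min_one (n v).aestronglyMeasurable)) ?_
        filter_upwards [hn.ae_add_le u v, hn.ae_nonneg (u+v), hn.ae_nonneg u, hn.ae_nonneg v]
          with ω h1 h2 h3 h4
        rw [abs_of_nonneg h2, abs_of_nonneg h3, abs_of_nonneg h4]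
        exact min_one_add_le h3 h4 h1
    _ = phi μ (n u) + phi μ (n v) := integral_add
        (integrable_min_one (n u).aestronglyMeasurable)
        (integrable_min_one (n v).aestronglyMeasurable)

variable (n : E → Ω →ₘ[μ] ℝ)

/-- type synonym endowing `E` with the metric of convergence in probability of the norm. -/
def EM (_n : E → Ω →ₘ[μ] ℝ) : Type := E

/-- the identity map from `E` to `EM n`. -/
def EM.of : E → EM n := id

instance : AddCommGroup (EM n) := ‹AddCommGroup E›
instance : Module (Linf μ) (EM n) := ‹Module (Linf μ) E›

theorem EM.of_add (x y : E) : EM.of n (x + y) = EM.of n x + EM.of n y := rfl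
theorem EM.of_sub (x y : E) : EM.of n (x - y) = EM.of n x - EM.of n y := rfl
theorem EM.of_smul (ξ : Linf μ) (x : E) : EM.of n (ξ • x) = ξ • EM.of n x := rfl

variable [IsProbabilityMeasure μ] [hfact : Fact (IsLinfNorm μ n)]

instance : PseudoMetricSpace (EM n) where
  dist x y := phi μ (n (x - y))
  dist_self x := by
    show phi μ (n (x - x)) = 0
    rw [sub_self]
    exact (congrArg (phi μ) hfact.out.n_zero).trans phi_zero
  dist_comm x y := by
    show phi μ (n (x - y)) = phi μ (n (y - x))
    exact congrArg (phi μ) (hfact.out.n_sub_rev x y)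
  dist_triangle x y z := by
    show phi μ (n (x - z)) ≤ phi μ (n (x - y)) + phi μ (n (y - z))
    have h : (x:E) - z = (x - y) + (y - z) := by abel
    rw [h]
    exact hfact.out.phi_add_le' (x - y) (y - z)

theorem em_dist_def (x y : EM n) : dist x y = phi μ (n (x - y)) := rfl

instance : IsUniformAddGroup (EM n) := by
  constructor
  have hn := hfact.out
  have key : ∀ p q : EM n × EM n,
      dist (p.1 - p.2) (q.1 - q.2) ≤ 2 * dist p q := by
    intro p q
    have h : (p.1 - p.2) - (q.1 - q.2) = (p.1 - q.1) + -(p.2 - q.2) := by abel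
    have hle : dist (p.1 - p.2) (q.1 - q.2) ≤ dist p.1 q.1 + dist p.2 q.2 := by
      calc dist (p.1 - p.2) (q.1 - q.2) = phi μ (n ((p.1 - q.1) + -(p.2 - q.2))) := by
            rw [em_dist_def, h]
        _ ≤ phi μ (n (p.1 - q.1)) + phi μ (n (-(p.2 - q.2))) := hn.phi_add_le' _ _
        _ = dist p.1 q.1 + dist p.2 q.2 := by rw [show n (-(p.2 - q.2)) = n (p.2 - q.2) from hn.n_neg _]; rfl
    refine hle.trans ?_
    rw [Prod.dist_eq]
    have h1 : dist p.1 q.1 ≤ max (dist p.1 q.1) (dist p.2 q.2) := le_max_left _ _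
    have h2 : dist p.2 q.2 ≤ max (dist p.1 q.1) (dist p.2 q.2) := le_max_right _ _
    linarith
  refine LipschitzWith.uniformContinuous (K := 2)
    (LipschitzWith.of_dist_le_mul fun p q => ?_)
  have := key p q
  push_cast
  linarith

/-- the norm is 1-Lipschitz from `EM n` to `L⁰`. -/
theorem lipschitzWith_n : LipschitzWith 1 (fun x : EM n => n x) := by
  have hn := hfact.out
  refine LipschitzWith.of_dist_le_mul fun x y => ?_
  rw [NNReal.coe_one, one_mul, em_dist_def, l0dist_def]
  refine integral_mono_ae (integrable_min_one (n x - n y).aestronglyMeasurable)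
    (integrable_min_one (n (x - y)).aestronglyMeasurable) ?_
  have hxy : ∀ᵐ ω ∂μ, n x ω ≤ n (x - y) ω + n y ω := by
    have h : (x:E) = (x - y) + y := by abel
    filter_upwards [hn.ae_add_le (x - y) y] with ω h1
    calc n x ω = n ((x - y) + y) ω := by rw [← h]
      _ ≤ n (x - y) ω + n y ω := h1
  have hyx : ∀ᵐ ω ∂μ, n y ω ≤ n (x - y) ω + n x ω := by
    have h : (y:E) = (y - x) + x := by abel
    filter_upwards [hn.ae_add_le (y - x) x] with ω h1
    calc n y ω = n ((y - x) + x) ω := by rw [← h]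
      _ ≤ n (y - x) ω + n x ω := h1
      _ = n (x - y) ω + n x ω := congrArg (fun t : Ω →ₘ[μ] ℝ => t ω + n x ω) (hn.n_sub_rev y x)
  filter_upwards [hxy, hyx, AEEqFun.coeFn_sub (n x) (n y), hn.ae_nonneg (x - y)]
    with ω h1 h2 h3 h4
  refine min_le_min le_rfl ?_
  rw [h3, Pi.sub_apply, abs_of_nonneg h4, abs_le]
  constructor <;> linarith

theorem uniformContinuous_n : UniformContinuous (fun x : EM n => n x) :=
  (lipschitzWith_n n).uniformContinuous

end E

end L0Ext
namespace L0Ext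

open UniformSpace

variable {Ω : Type} [MeasurableSpace Ω] {μ : Measure Ω}

/-! ### Truncation in `L⁰` -/

/-- truncation of a real number at level `m+1`. -/
def truncFn (m : ℕ) (r : ℝ) : ℝ := max (-(m+1:ℝ)) (min r (m+1))

theorem truncFn_continuous (m : ℕ) : Continuous (truncFn m) :=
  continuous_const.max (continuous_id.min continuous_const)

theorem truncFn_abs_le (m : ℕ) (r : ℝ) : |truncFn m r| ≤ m + 1 := by
  rw [abs_le, truncFn]
  constructor
  · exact le_max_left _ _
  · exact max_le (neg_le_self (by positivity)) ((min_le_right _ _))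

theorem truncFn_eq_of_abs_le {m : ℕ} {r : ℝ} (h : |r| ≤ m + 1) : truncFn m r = r := by
  rw [abs_le] at h
  rw [truncFn, min_eq_left h.2, max_eq_right h.1]

/-- truncation of `ξ ∈ L⁰` at level `m+1`, as an element of `L^∞`. -/
def truncL (ξ : Ω →ₘ[μ] ℝ) (m : ℕ) : Linf μ :=
  ⟨AEEqFun.comp (truncFn m) (truncFn_continuous m) ξ, m + 1, by
    filter_upwards [AEEqFun.coeFn_comp (truncFn m) (truncFn_continuous m) ξ] with ω h
    rw [h]
    exact truncFn_abs_le m (ξ ω)⟩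

theorem truncL_coeFn (ξ : Ω →ₘ[μ] ℝ) (m : ℕ) :
    ⇑((truncL ξ m : Linf μ) : Ω →ₘ[μ] ℝ) =ᵐ[μ] fun ω => truncFn m (ξ ω) :=
  AEEqFun.coeFn_comp (truncFn m) (truncFn_continuous m) ξ

/-- the "bad set" where the truncation at level `m+1` differs from `ξ`. -/
def badSet (ξ : Ω →ₘ[μ] ℝ) (m : ℕ) : Set Ω := {ω | (m+1:ℝ) < |ξ ω|}

theorem badSet_measurable (ξ : Ω →ₘ[μ] ℝ) (m : ℕ) : MeasurableSet (badSet ξ m) :=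
  measurableSet_lt measurable_const ξ.measurable.abs

/-- the measure of the bad set. -/
def B (μ : Measure Ω) (ξ : Ω →ₘ[μ] ℝ) (m : ℕ) : ℝ := (μ (badSet ξ m)).toReal

theorem truncL_eq_on_good (ξ : Ω →ₘ[μ] ℝ) (m : ℕ) :
    ∀ᵐ ω ∂μ, ω ∉ badSet ξ m → ((truncL ξ m : Linf μ) : Ω →ₘ[μ] ℝ) ω = ξ ω := by
  filter_upwards [truncL_coeFn ξ m] with ω h hgood
  rw [h]
  exact truncFn_eq_of_abs_le (not_lt.mp hgood)

theorem tendsto_B [IsProbabilityMeasure μ] (ξ : Ω →ₘ[μ] ℝ) :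
    Filter.Tendsto (B μ ξ) Filter.atTop (nhds 0) := by
  have hanti : Antitone (badSet ξ) := by
    intro m k hmk ω hω
    simp only [badSet, Set.mem_setOf_eq] at hω ⊢
    have : (m+1:ℝ) ≤ k+1 := by exact_mod_cast by omega
    linarith
  have hempty : (⋂ m, badSet ξ m) = ∅ := by
    ext ω
    simp only [Set.mem_iInter, Set.mem_empty_iff_false, iff_false, not_forall]
    obtain ⟨m, hm⟩ := exists_nat_ge (|ξ ω|)
    exact ⟨m, by simp only [badSet, Set.mem_setOf_eq, not_lt]; linarith⟩
  have h := tendsto_measure_iInter_atTop (μ := μ)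
    (fun m => (badSet_measurable ξ m).nullMeasurableSet) hanti ⟨0, measure_ne_top μ _⟩
  rw [hempty, measure_empty] at h
  have := (ENNReal.tendsto_toReal (by simp)).comp h
  simp at this; exact this

theorem B_antitone [IsProbabilityMeasure μ] (ξ : Ω →ₘ[μ] ℝ) : Antitone (B μ ξ) := by
  intro m k hmk
  refine ENNReal.toReal_mono (measure_ne_top μ _) (measure_mono ?_)
  intro ω hω
  simp only [badSet, Set.mem_setOf_eq] at hω ⊢
  have : (m+1:ℝ) ≤ k+1 := by exact_mod_cast by omega
  linarith

/-! ### The completion of `E` -/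

section E

variable {E : Type} [AddCommGroup E] [Module (Linf μ) E]
variable (n : E → Ω →ₘ[μ] ℝ) [IsProbabilityMeasure μ] [hfact : Fact (IsLinfNorm μ n)]

/-- the completion of `E` in the metric induced by the `L^∞`-norm. -/
abbrev CE := Completion (EM n)

/-- the canonical embedding of `E` in its completion. -/
def toC (x : E) : CE n := ((EM.of n x : EM n) : Completion (EM n))

theorem toC_dense : DenseRange (toC n) := Completion.denseRange_coe (α := EM n)

theorem toC_add (x y : E) : toC n (x + y) = toC n x + toC n y := Completion.coe_add _ _
theorem toC_sub (x y : E) : toC n (x - y) = toC n x - toC n y := Completion.coe_sub _ _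
theorem toC_zero : toC n 0 = 0 := Completion.coe_zero
theorem toC_dist (x y : E) : dist (toC n x) (toC n y) = phi μ (n (x - y)) :=
  Completion.dist_eq _ _

/-- the extension of the norm to the completion. -/
def NC : CE n → Ω →ₘ[μ] ℝ := Completion.extension (fun x : EM n => n x)

theorem NC_toC (x : E) : NC n (toC n x) = n x :=
  Completion.extension_coe (uniformContinuous_n n) (EM.of n x)

theorem continuous_NC : Continuous (NC n) := Completion.continuous_extension

theorem dist_eq_phi_NC (z w : CE n) : dist z w = phi μ (NC n (z - w)) := by
  have hphi : ∀ ξ : Ω →ₘ[μ] ℝ, phi μ ξ = dist ξ 0 := by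
    intro ξ; rw [l0dist_def, sub_zero]
  refine Completion.induction_on₂ z w ?_ fun x y => ?_
  · refine isClosed_eq continuous_dist ?_
    have : Continuous fun p : CE n × CE n => NC n (p.1 - p.2) :=
      (continuous_NC n).comp (continuous_fst.sub continuous_snd)
    simp only [hphi]
    exact Continuous.dist this continuous_const
  · rw [← Completion.coe_sub, Completion.dist_eq,
      show NC n (((x - y : EM n) : Completion (EM n))) = n ((x:E) - y) from
        Completion.extension_coe (uniformContinuous_n n) (x - y)]
    rfl

theorem NC_nonneg (z : CE n) : 0 ≤ NC n z := by
  refine Completion.induction_on z ?_ fun x => ?_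
  · have : {z : CE n | 0 ≤ NC n z} = NC n ⁻¹' {ξ | 0 ≤ ξ} := rfl
    rw [this]
    exact isClosed_nonneg.preimage (continuous_NC n)
  · rw [show NC n ((x : EM n) : Completion (EM n)) = n x from
      Completion.extension_coe (uniformContinuous_n n) x]
    exact hfact.out.nonneg x

theorem NC_zero : NC n 0 = 0 := by
  rw [← toC_zero, NC_toC, hfact.out.n_zero]

theorem NC_eq_zero_iff (z : CE n) : NC n z = 0 ↔ z = 0 := by
  constructor
  · intro h
    have : dist z 0 = 0 := by rw [dist_eq_phi_NC, sub_zero, h, phi_zero]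
    exact dist_eq_zero.mp this
  · rintro rfl; exact NC_zero n

theorem NC_add_le (z w : CE n) : NC n (z + w) ≤ NC n z + NC n w := by
  have hcont_add : Continuous fun p : (Ω →ₘ[μ] ℝ) × (Ω →ₘ[μ] ℝ) => p.1 + p.2 := by
    have : (fun p : (Ω →ₘ[μ] ℝ) × (Ω →ₘ[μ] ℝ) => p.1 + p.2) =
        fun p => p.1 - (0 - p.2) := by funext p; ring
    rw [this]
    exact lipschitzWith_sub.continuous.comp (continuous_fst.prodMk
      (lipschitzWith_sub.continuous.comp (continuous_const.prodMk continuous_snd)))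
  refine Completion.induction_on₂ z w ?_ fun x y => ?_
  · have : {p : CE n × CE n | NC n (p.1 + p.2) ≤ NC n p.1 + NC n p.2} =
        (fun p : CE n × CE n => (NC n (p.1 + p.2), NC n p.1 + NC n p.2)) ⁻¹'
          {q : (Ω →ₘ[μ] ℝ) × (Ω →ₘ[μ] ℝ) | q.1 ≤ q.2} := rfl
    rw [this]
    refine isClosed_le_l0.preimage (Continuous.prodMk ?_ ?_)
    · exact (continuous_NC n).comp (continuous_fst.add continuous_snd)
    · exact hcont_add.comp (((continuous_NC n).comp continuous_fst).prodMk
        ((continuous_NC n).comp continuous_snd))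
  · rw [← Completion.coe_add,
      show NC n (((x + y : EM n) : Completion (EM n))) = n ((x:E) + y) from
        Completion.extension_coe (uniformContinuous_n n) (x + y),
      show NC n ((x : EM n) : Completion (EM n)) = n x from
        Completion.extension_coe (uniformContinuous_n n) x,
      show NC n ((y : EM n) : Completion (EM n)) = n y from
        Completion.extension_coe (uniformContinuous_n n) y]
    exact hfact.out.norm_add_le x y

/-! ### Multiplication by `L^∞` elements on the completion -/

theorem uc_smul (a : Linf μ) : UniformContinuous (fun x : EM n => a • x) := by
  obtain ⟨c, hc⟩ := a.2
  have hc0 : 0 ≤ max c 1 := zero_le_one.trans (le_max_right _ _)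
  refine LipschitzWith.uniformContinuous (K := Real.toNNReal (max c 1))
    (LipschitzWith.of_dist_le_mul fun x y => ?_)
  rw [Real.coe_toNNReal _ hc0]
  have h1 : (a • x : EM n) - a • y = a • ((x : E) - y) := (smul_sub a (x : E) y).symm
  have habs : ∀ᵐ ω ∂μ, |(|(a : Ω →ₘ[μ] ℝ)|) ω| ≤ c := by
    filter_upwards [hc, AEEqFun.coeFn_abs (a : Ω →ₘ[μ] ℝ)] with ω h1 h2
    rw [h2, abs_abs]
    exact h1
  calc dist (a • x) (a • y) = phi μ (|(a : Ω →ₘ[μ] ℝ)| * n ((x:E) - y)) := by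
        rw [em_dist_def, h1]; exact congrArg (phi μ) (hfact.out.norm_smul a ((x:E) - y))
    _ = dist (|(a : Ω →ₘ[μ] ℝ)| * n ((x:E) - y)) (|(a : Ω →ₘ[μ] ℝ)| * 0) := by
        rw [mul_zero, l0dist_def, sub_zero]
    _ ≤ max c 1 * dist (n ((x:E) - y)) 0 := dist_mul_le habs _ _
    _ = max c 1 * dist x y := by rw [l0dist_def, sub_zero, em_dist_def]

/-- multiplication by an `L^∞` scalar, extended to the completion. -/
def mulL (a : Linf μ) : CE n → CE n := Completion.map (fun x : EM n => a • x)

theorem mulL_toC (a : Linf μ) (x : E) : mulL n a (toC n x) = toC n (a • x) :=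
  Completion.map_coe (uc_smul n a) (EM.of n x)

theorem continuous_mulL (a : Linf μ) : Continuous (mulL n a) := Completion.continuous_map

/-- KEY estimate: if two `L^∞` scalars agree off a set `s`, the corresponding
multiplication operators on the completion are uniformly `μ(s)`-close. -/
theorem dist_mulL_le {a b : Linf μ} {s : Set Ω} (hs : MeasurableSet s)
    (hab : ∀ᵐ ω ∂μ, ω ∉ s → (a : Ω →ₘ[μ] ℝ) ω = (b : Ω →ₘ[μ] ℝ) ω) (z : CE n) :
    dist (mulL n a z) (mulL n b z) ≤ (μ s).toReal := by
  refine Completion.induction_on z ?_ fun x => ?_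
  · exact isClosed_le (Continuous.dist (continuous_mulL n a) (continuous_mulL n b))
      continuous_const
  · simp only [mulL]
    rw [Completion.map_coe (uc_smul n a) x, Completion.map_coe (uc_smul n b) x,
      Completion.dist_eq, em_dist_def]
    have h : (a • x : EM n) - b • x = ((a - b : Linf μ)) • ((x : E)) := (sub_smul a b (x:E)).symm
    rw [h]; refine (congrArg (phi μ) (hfact.out.norm_smul (a - b) x)).trans_le ?_
    refine phi_le_measure hs ?_
    have hsub : ((a - b : Linf μ) : Ω →ₘ[μ] ℝ) = (a : Ω →ₘ[μ] ℝ) - b := rfl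
    filter_upwards [hab,
      AEEqFun.coeFn_mul |((a - b : Linf μ) : Ω →ₘ[μ] ℝ)| (n x),
      AEEqFun.coeFn_abs ((a - b : Linf μ) : Ω →ₘ[μ] ℝ),
      AEEqFun.coeFn_sub (a : Ω →ₘ[μ] ℝ) (b : Ω →ₘ[μ] ℝ)] with ω h1 h2 h3 h4
    intro hns
    rw [h2]
    show |((a - b : Linf μ) : Ω →ₘ[μ] ℝ)| ω * n x ω = 0
    rw [h3, hsub, h4, Pi.sub_apply, h1 hns]
    simp

/-! ### The `L⁰`-scalar multiplication on the completion -/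

/-- approximating sequence for the `L⁰`-scalar action. -/
def smulSeq (ξ : Ω →ₘ[μ] ℝ) (z : CE n) (m : ℕ) : CE n := mulL n (truncL ξ m) z

theorem dist_smulSeq_le (ξ : Ω →ₘ[μ] ℝ) (z : CE n) {m k : ℕ} (h : m ≤ k) :
    dist (smulSeq n ξ z m) (smulSeq n ξ z k) ≤ B μ ξ m := by
  refine dist_mulL_le n (badSet_measurable ξ m) ?_ z
  filter_upwards [truncL_eq_on_good (μ := μ) ξ m, truncL_eq_on_good (μ := μ) ξ k]
    with ω h1 h2 hgood
  have hωk : ω ∉ badSet ξ k := by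
    simp only [badSet, Set.mem_setOf_eq, not_lt] at hgood ⊢
    have : (m+1:ℝ) ≤ k+1 := by exact_mod_cast by omega
    linarith
  rw [h1 hgood, h2 hωk]

theorem cauchySeq_smulSeq (ξ : Ω →ₘ[μ] ℝ) (z : CE n) : CauchySeq (smulSeq n ξ z) := by
  refine Metric.cauchySeq_iff'.mpr fun ε hε => ?_
  obtain ⟨N, hN⟩ := (Metric.tendsto_atTop.mp (tendsto_B ξ)) ε hε
  refine ⟨N, fun m hm => ?_⟩
  have h1 := dist_smulSeq_le n ξ z hm
  have h2 := hN N le_rfl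
  rw [Real.dist_eq, sub_zero] at h2
  have hBnn : 0 ≤ B μ ξ N := ENNReal.toReal_nonneg
  rw [dist_comm]
  calc dist (smulSeq n ξ z N) (smulSeq n ξ z m) ≤ B μ ξ N := h1
    _ < ε := by rw [abs_of_nonneg hBnn] at h2; simpa using h2

/-- the `L⁰`-scalar action on the completion. -/
def smulC (ξ : Ω →ₘ[μ] ℝ) (z : CE n) : CE n := limUnder Filter.atTop (smulSeq n ξ z)

theorem tendsto_smulSeq (ξ : Ω →ₘ[μ] ℝ) (z : CE n) :
    Filter.Tendsto (smulSeq n ξ z) Filter.atTop (nhds (smulC n ξ z)) :=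
  tendsto_nhds_limUnder (cauchySeq_tendsto_of_complete (cauchySeq_smulSeq n ξ z))

theorem dist_smulSeq_smulC (ξ : Ω →ₘ[μ] ℝ) (z : CE n) (m : ℕ) :
    dist (smulSeq n ξ z m) (smulC n ξ z) ≤ B μ ξ m := by
  have hlim : Filter.Tendsto (fun k => dist (smulSeq n ξ z m) (smulSeq n ξ z k))
      Filter.atTop (nhds (dist (smulSeq n ξ z m) (smulC n ξ z))) :=
    Filter.Tendsto.dist tendsto_const_nhds (tendsto_smulSeq n ξ z)
  refine le_of_tendsto hlim ?_
  filter_upwards [Filter.eventually_ge_atTop m] with k hk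
  exact dist_smulSeq_le n ξ z hk

/-- on `L^∞` scalars, the action agrees with `mulL`. -/
theorem smulC_coe_linf (a : Linf μ) (z : CE n) : smulC n (a : Ω →ₘ[μ] ℝ) z = mulL n a z := by
  obtain ⟨c, hc⟩ := a.2
  obtain ⟨M, hM⟩ := exists_nat_ge c
  have hconst : ∀ m, M ≤ m → truncL ((a : Ω →ₘ[μ] ℝ)) m = a := by
    intro m hm
    refine Subtype.ext (AEEqFun.ext ?_)
    filter_upwards [truncL_coeFn ((a : Ω →ₘ[μ] ℝ)) m, hc] with ω h1 h2
    rw [h1]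
    refine truncFn_eq_of_abs_le (h2.trans ?_)
    have : (M:ℝ) ≤ m := by exact_mod_cast hm
    linarith
  have heventually : ∀ᶠ m in Filter.atTop, smulSeq n (a : Ω →ₘ[μ] ℝ) z m = mulL n a z := by
    filter_upwards [Filter.eventually_ge_atTop M] with m hm
    rw [smulSeq, hconst m hm]
  have h1 : Filter.Tendsto (smulSeq n (a : Ω →ₘ[μ] ℝ) z) Filter.atTop (nhds (mulL n a z)) :=
    Filter.Tendsto.congr' (by filter_upwards [heventually] with m hm; rw [hm]) tendsto_const_nhds
  exact tendsto_nhds_unique (tendsto_smulSeq n _ z) h1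

end E

end L0Ext
namespace L0Ext

open UniformSpace Filter

variable {Ω : Type} [MeasurableSpace Ω] {μ : Measure Ω}

theorem eq_of_tendsto_dist {X : Type} [MetricSpace X] {u w : ℕ → X} {a b : X}
    (hu : Tendsto u atTop (nhds a)) (hw : Tendsto w atTop (nhds b))
    (h : Tendsto (fun m => dist (u m) (w m)) atTop (nhds 0)) : a = b := by
  have h1 : Tendsto (fun m => dist (u m) (w m)) atTop (nhds (dist a b)) := hu.dist hw
  have h2 : dist a b = 0 := tendsto_nhds_unique h1 h
  exact dist_eq_zero.mp h2

section E

variable {E : Type} [AddCommGroup E] [Module (Linf μ) E]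
variable (n : E → Ω →ₘ[μ] ℝ) [IsProbabilityMeasure μ] [hfact : Fact (IsLinfNorm μ n)]

theorem mulL_add_right (a : Linf μ) (z w : CE n) :
    mulL n a (z + w) = mulL n a z + mulL n a w := by
  refine Completion.induction_on₂ z w ?_ fun x y => ?_
  · refine isClosed_eq ((continuous_mulL n a).comp (continuous_fst.add continuous_snd)) ?_
    exact ((continuous_mulL n a).comp continuous_fst).add
      ((continuous_mulL n a).comp continuous_snd)
  · simp only [mulL]
    rw [← Completion.coe_add, Completion.map_coe (uc_smul n a),
      Completion.map_coe (uc_smul n a), Completion.map_coe (uc_smul n a), ← Completion.coe_add,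
      smul_add]

theorem mulL_add_left (a b : Linf μ) (z : CE n) :
    mulL n (a + b) z = mulL n a z + mulL n b z := by
  refine Completion.induction_on z ?_ fun x => ?_
  · refine isClosed_eq (continuous_mulL n (a + b)) ?_
    exact (continuous_mulL n a).add (continuous_mulL n b)
  · simp only [mulL]
    rw [Completion.map_coe (uc_smul n (a + b)), Completion.map_coe (uc_smul n a),
      Completion.map_coe (uc_smul n b), ← Completion.coe_add, add_smul]

theorem mulL_mul (a b : Linf μ) (z : CE n) :
    mulL n (a * b) z = mulL n a (mulL n b z) := by
  refine Completion.induction_on z ?_ fun x => ?_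
  · refine isClosed_eq (continuous_mulL n (a * b)) ?_
    exact (continuous_mulL n a).comp (continuous_mulL n b)
  · simp only [mulL]
    rw [Completion.map_coe (uc_smul n (a * b)), Completion.map_coe (uc_smul n b),
      Completion.map_coe (uc_smul n a), mul_smul]

theorem mulL_one (z : CE n) : mulL n 1 z = z := by
  refine Completion.induction_on z ?_ fun x => ?_
  · exact isClosed_eq (continuous_mulL n 1) continuous_id
  · simp only [mulL]
    rw [Completion.map_coe (uc_smul n 1), one_smul]

theorem mulL_zero_left (z : CE n) : mulL n 0 z = 0 := by
  refine Completion.induction_on z ?_ fun x => ?_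
  · exact isClosed_eq (continuous_mulL n 0) continuous_const
  · simp only [mulL]
    rw [Completion.map_coe (uc_smul n 0), zero_smul, Completion.coe_zero]

theorem mulL_zero_right (a : Linf μ) : mulL n a 0 = 0 := by
  have h0 : (0 : CE n) = ((0 : EM n) : Completion (EM n)) := Completion.coe_zero.symm
  rw [h0]
  simp only [mulL]
  rw [Completion.map_coe (uc_smul n a), smul_zero]

theorem NC_mulL (a : Linf μ) (z : CE n) :
    NC n (mulL n a z) = |(a : Ω →ₘ[μ] ℝ)| * NC n z := by
  obtain ⟨c, hc⟩ := a.2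
  have habs : ∀ᵐ ω ∂μ, |(|(a : Ω →ₘ[μ] ℝ)|) ω| ≤ c := by
    filter_upwards [hc, AEEqFun.coeFn_abs (a : Ω →ₘ[μ] ℝ)] with ω h1 h2
    rw [h2, abs_abs]
    exact h1
  refine Completion.induction_on z ?_ fun x => ?_
  · refine isClosed_eq ((continuous_NC n).comp (continuous_mulL n a)) ?_
    exact (continuous_mul_bounded habs).comp (continuous_NC n)
  · simp only [mulL]
    rw [Completion.map_coe (uc_smul n a),
      show NC n (((a • x : EM n) : Completion (EM n))) = n ((a • x : E)) from
        Completion.extension_coe (uniformContinuous_n n) _,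
      show NC n ((x : EM n) : Completion (EM n)) = n x from
        Completion.extension_coe (uniformContinuous_n n) x]
    exact hfact.out.norm_smul a x

/-- the truncated scalars converge after multiplication by a fixed `L⁰` element. -/
theorem tendsto_abs_truncL_mul (ξ u : Ω →ₘ[μ] ℝ) :
    Tendsto (fun m => |((truncL ξ m : Linf μ) : Ω →ₘ[μ] ℝ)| * u) atTop (nhds (|ξ| * u)) := by
  rw [tendsto_iff_dist_tendsto_zero]
  refine squeeze_zero (fun m => dist_nonneg) (fun m => ?_) (tendsto_B ξ)
  rw [l0dist_def]
  have h : |((truncL ξ m : Linf μ) : Ω →ₘ[μ] ℝ)| * u - |ξ| * u =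
      (|((truncL ξ m : Linf μ) : Ω →ₘ[μ] ℝ)| - |ξ|) * u := by ring
  rw [h]
  refine phi_le_measure (badSet_measurable ξ m) ?_
  filter_upwards [truncL_eq_on_good (μ := μ) ξ m,
    AEEqFun.coeFn_mul (|((truncL ξ m : Linf μ) : Ω →ₘ[μ] ℝ)| - |ξ|) u,
    AEEqFun.coeFn_sub (|((truncL ξ m : Linf μ) : Ω →ₘ[μ] ℝ)|) (|ξ|),
    AEEqFun.coeFn_abs ((truncL ξ m : Linf μ) : Ω →ₘ[μ] ℝ),
    AEEqFun.coeFn_abs ξ] with ω h1 h2 h3 h4 h5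
  intro hgood
  rw [h2]
  show ((|((truncL ξ m : Linf μ) : Ω →ₘ[μ] ℝ)| - |ξ|)) ω * u ω = 0
  rw [h3, Pi.sub_apply, h4, h5, h1 hgood, sub_self, zero_mul]

/-- three-set bound on measures. -/
theorem toReal_measure_union3_le [IsProbabilityMeasure μ] (A B' C : Set Ω) :
    (μ (A ∪ B' ∪ C)).toReal ≤ (μ A).toReal + (μ B').toReal + (μ C).toReal := by
  have h1 : μ (A ∪ B' ∪ C) ≤ μ A + μ B' + μ C :=
    (measure_union_le _ _).trans (add_le_add (measure_union_le _ _) le_rfl)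
  have h2 := ENNReal.toReal_mono (by
    exact ENNReal.add_ne_top.mpr ⟨ENNReal.add_ne_top.mpr
      ⟨measure_ne_top μ _, measure_ne_top μ _⟩, measure_ne_top μ _⟩) h1
  rw [ENNReal.toReal_add (ENNReal.add_ne_top.mpr ⟨measure_ne_top μ _, measure_ne_top μ _⟩)
    (measure_ne_top μ _), ENNReal.toReal_add (measure_ne_top μ _) (measure_ne_top μ _)] at h2
  exact h2

instance : SMul (Ω →ₘ[μ] ℝ) (CE n) := ⟨smulC n⟩

theorem smulC_def (ξ : Ω →ₘ[μ] ℝ) (z : CE n) : ξ • z = smulC n ξ z := rfl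

theorem smulC_add (ξ : Ω →ₘ[μ] ℝ) (z w : CE n) :
    smulC n ξ (z + w) = smulC n ξ z + smulC n ξ w := by
  refine eq_of_tendsto_dist (tendsto_smulSeq n ξ (z + w))
    ((tendsto_smulSeq n ξ z).add (tendsto_smulSeq n ξ w)) ?_
  have heq : ∀ m, smulSeq n ξ (z + w) m = smulSeq n ξ z m + smulSeq n ξ w m := by
    intro m
    exact mulL_add_right n (truncL ξ m) z w
  simp only [heq, dist_self]
  exact tendsto_const_nhds

theorem smulC_add_scalar (ξ η : Ω →ₘ[μ] ℝ) (z : CE n) :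
    smulC n (ξ + η) z = smulC n ξ z + smulC n η z := by
  refine eq_of_tendsto_dist (tendsto_smulSeq n (ξ + η) z)
    ((tendsto_smulSeq n ξ z).add (tendsto_smulSeq n η z)) ?_
  refine squeeze_zero (fun m => dist_nonneg) (fun m => ?_) ?_
    (g := fun m => B μ ξ m + B μ η m + B μ (ξ + η) m)
  · have heq : smulSeq n ξ z m + smulSeq n η z m = mulL n (truncL ξ m + truncL η m) z :=
      (mulL_add_left n (truncL ξ m) (truncL η m) z).symm
    rw [heq]
    refine (dist_mulL_le n (((badSet_measurable ξ m).union (badSet_measurable η m)).union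
      (badSet_measurable (ξ + η) m)) ?_ z).trans
      (toReal_measure_union3_le _ _ _)
    filter_upwards [truncL_eq_on_good (μ := μ) ξ m, truncL_eq_on_good (μ := μ) η m,
      truncL_eq_on_good (μ := μ) (ξ + η) m, AEEqFun.coeFn_add ξ η,
      AEEqFun.coeFn_add ((truncL ξ m : Linf μ) : Ω →ₘ[μ] ℝ)
        ((truncL η m : Linf μ) : Ω →ₘ[μ] ℝ)] with ω h1 h2 h3 h4 h5
    intro hgood
    simp only [Set.mem_union, not_or] at hgood
    obtain ⟨⟨hg1, hg2⟩, hg3⟩ := hgood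
    show ((truncL (ξ + η) m : Linf μ) : Ω →ₘ[μ] ℝ) ω =
      ((truncL ξ m + truncL η m : Linf μ) : Ω →ₘ[μ] ℝ) ω
    have hcoe : ((truncL ξ m + truncL η m : Linf μ) : Ω →ₘ[μ] ℝ) =
        ((truncL ξ m : Linf μ) : Ω →ₘ[μ] ℝ) + ((truncL η m : Linf μ) : Ω →ₘ[μ] ℝ) := rfl
    rw [h3 hg3, hcoe, h5, Pi.add_apply, h1 hg1, h2 hg2, h4, Pi.add_apply]
  · have := ((tendsto_B ξ).add (tendsto_B η)).add (tendsto_B (ξ + η))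
    simpa using this

theorem smulC_zero_right (ξ : Ω →ₘ[μ] ℝ) : smulC n ξ (0 : CE n) = 0 := by
  refine eq_of_tendsto_dist (tendsto_smulSeq n ξ 0) (tendsto_const_nhds (x := (0 : CE n))) ?_
  have heq : ∀ m, smulSeq n ξ (0 : CE n) m = 0 := fun m => mulL_zero_right n (truncL ξ m)
  simp only [heq, dist_self]
  exact tendsto_const_nhds

theorem smulC_one (z : CE n) : smulC n (1 : Ω →ₘ[μ] ℝ) z = z := by
  have h : (1 : Ω →ₘ[μ] ℝ) = ((1 : Linf μ) : Ω →ₘ[μ] ℝ) := rfl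
  rw [h, smulC_coe_linf, mulL_one]

theorem smulC_zero_left (z : CE n) : smulC n (0 : Ω →ₘ[μ] ℝ) z = 0 := by
  have h : (0 : Ω →ₘ[μ] ℝ) = ((0 : Linf μ) : Ω →ₘ[μ] ℝ) := rfl
  rw [h, smulC_coe_linf, mulL_zero_left]

theorem smulC_mul (ξ η : Ω →ₘ[μ] ℝ) (z : CE n) :
    smulC n (ξ * η) z = smulC n ξ (smulC n η z) := by
  have key : ∀ m k : ℕ,
      dist (mulL n (truncL ξ m) (smulC n η z)) (smulC n (ξ * η) z) ≤
        B μ ξ m + 2 * B μ (ξ * η) k := by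
    intro m k
    have hdj : ∀ j : ℕ, dist (mulL n (truncL ξ m) (mulL n (truncL η j) z)) (smulC n (ξ * η) z) ≤
        (B μ ξ m + B μ η j + B μ (ξ * η) k) + B μ (ξ * η) k := by
      intro j
      have h1 : mulL n (truncL ξ m) (mulL n (truncL η j) z) =
          mulL n (truncL ξ m * truncL η j) z := (mulL_mul n _ _ z).symm
      rw [h1]
      refine (dist_triangle _ (smulSeq n (ξ * η) z k) _).trans (add_le_add ?_ ?_)
      · refine (dist_mulL_le n (((badSet_measurable ξ m).union (badSet_measurable η j)).union
          (badSet_measurable (ξ * η) k)) ?_ z).trans (toReal_measure_union3_le _ _ _)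
        filter_upwards [truncL_eq_on_good (μ := μ) ξ m, truncL_eq_on_good (μ := μ) η j,
          truncL_eq_on_good (μ := μ) (ξ * η) k, AEEqFun.coeFn_mul ξ η,
          AEEqFun.coeFn_mul ((truncL ξ m : Linf μ) : Ω →ₘ[μ] ℝ)
            ((truncL η j : Linf μ) : Ω →ₘ[μ] ℝ)] with ω h1 h2 h3 h4 h5
        intro hgood
        simp only [Set.mem_union, not_or] at hgood
        obtain ⟨⟨hg1, hg2⟩, hg3⟩ := hgood
        show ((truncL ξ m * truncL η j : Linf μ) : Ω →ₘ[μ] ℝ) ω =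
          ((truncL (ξ * η) k : Linf μ) : Ω →ₘ[μ] ℝ) ω
        have hcoe : ((truncL ξ m * truncL η j : Linf μ) : Ω →ₘ[μ] ℝ) =
            ((truncL ξ m : Linf μ) : Ω →ₘ[μ] ℝ) * ((truncL η j : Linf μ) : Ω →ₘ[μ] ℝ) := rfl
        rw [hcoe, h5, Pi.mul_apply, h1 hg1, h2 hg2, h3 hg3, h4, Pi.mul_apply]
      · exact dist_smulSeq_smulC n (ξ * η) z k
    have hlim : Tendsto (fun j => dist (mulL n (truncL ξ m) (mulL n (truncL η j) z))
        (smulC n (ξ * η) z)) atTop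
        (nhds (dist (mulL n (truncL ξ m) (smulC n η z)) (smulC n (ξ * η) z))) := by
      refine Tendsto.dist ?_ tendsto_const_nhds
      exact ((continuous_mulL n (truncL ξ m)).tendsto _).comp (tendsto_smulSeq n η z)
    have hrhs : Tendsto (fun j => (B μ ξ m + B μ η j + B μ (ξ * η) k) + B μ (ξ * η) k) atTop
        (nhds (B μ ξ m + 2 * B μ (ξ * η) k)) := by
      have := ((tendsto_const_nhds (x := B μ ξ m)).add (tendsto_B η)).add
        (tendsto_const_nhds (x := B μ (ξ * η) k))
      have h2 := this.add (tendsto_const_nhds (x := B μ (ξ * η) k))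
      convert h2 using 2
      ring
    exact le_of_tendsto_of_tendsto' hlim hrhs hdj
  have key2 : ∀ k : ℕ,
      dist (smulC n ξ (smulC n η z)) (smulC n (ξ * η) z) ≤ 2 * B μ (ξ * η) k := by
    intro k
    have hm : ∀ m : ℕ, dist (smulC n ξ (smulC n η z)) (smulC n (ξ * η) z) ≤
        B μ ξ m + (B μ ξ m + 2 * B μ (ξ * η) k) := by
      intro m
      refine (dist_triangle _ (mulL n (truncL ξ m) (smulC n η z)) _).trans (add_le_add ?_ ?_)
      · rw [dist_comm]
        exact dist_smulSeq_smulC n ξ (smulC n η z) m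
      · exact key m k
    have hrhs : Tendsto (fun m => B μ ξ m + (B μ ξ m + 2 * B μ (ξ * η) k)) atTop
        (nhds (2 * B μ (ξ * η) k)) := by
      have := (tendsto_B ξ).add ((tendsto_B ξ).add
        (tendsto_const_nhds (x := 2 * B μ (ξ * η) k)))
      simpa using this
    exact le_of_tendsto_of_tendsto' tendsto_const_nhds hrhs hm
  have hfinal : dist (smulC n ξ (smulC n η z)) (smulC n (ξ * η) z) ≤ 0 := by
    have hrhs : Tendsto (fun k => 2 * B μ (ξ * η) k) atTop (nhds 0) := by
      have := (tendsto_B (ξ * η)).const_mul (2:ℝ)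
      simpa using this
    exact le_of_tendsto_of_tendsto' tendsto_const_nhds hrhs key2
  have h0 : dist (smulC n ξ (smulC n η z)) (smulC n (ξ * η) z) = 0 :=
    le_antisymm hfinal dist_nonneg
  exact (dist_eq_zero.mp h0).symm

/-- homogeneity of the extended norm. -/
theorem NC_smulC (ξ : Ω →ₘ[μ] ℝ) (z : CE n) :
    NC n (smulC n ξ z) = |ξ| * NC n z := by
  refine tendsto_nhds_unique ?_ ?_ (f := fun m => NC n (smulSeq n ξ z m)) (l := atTop)
  · exact ((continuous_NC n).tendsto _).comp (tendsto_smulSeq n ξ z)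
  · have heq : ∀ m, NC n (smulSeq n ξ z m) =
        |((truncL ξ m : Linf μ) : Ω →ₘ[μ] ℝ)| * NC n z := fun m => NC_mulL n (truncL ξ m) z
    simp only [heq]
    exact tendsto_abs_truncL_mul ξ (NC n z)

/-- the `L⁰`-module structure on the completion. -/
instance : Module (Ω →ₘ[μ] ℝ) (CE n) where
  one_smul z := smulC_one n z
  mul_smul ξ η z := smulC_mul n ξ η z
  smul_zero ξ := smulC_zero_right n ξ
  smul_add ξ z w := smulC_add n ξ z w
  add_smul ξ η z := smulC_add_scalar n ξ η z
  zero_smul z := smulC_zero_left n z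

end E

end L0Ext
/-- every `L^∞`-normed module `E` admits an `L⁰`-extension: a complete
random normed module `E₀` together with a norm-preserving `L^∞`-module homomorphism
`T : E → E₀` with dense range. -/
theorem exists_L0_extension
    {Ω : Type} [MeasurableSpace Ω] (μ : Measure Ω) [IsProbabilityMeasure μ]
    {E : Type} [AddCommGroup E] [Module (Linf μ) E]
    (n : E → Ω →ₘ[μ] ℝ) (hn : IsLinfNorm μ n) :
    ∃ (S : RNMod Ω μ) (T : E → S.carrier), IsL0Extension μ n S T := by
  haveI := Fact.mk hn
  refine ⟨⟨L0Ext.CE n, inferInstance, inferInstance, L0Ext.NC n, ?_⟩, L0Ext.toC n, ?_, ?_, ?_, ?_⟩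
  · exact { nonneg := L0Ext.NC_nonneg n
            eq_zero_iff := L0Ext.NC_eq_zero_iff n
            norm_smul := fun ξ z => L0Ext.NC_smulC n ξ z
            norm_add_le := L0Ext.NC_add_le n }
  · -- completeness
    intro x hx
    have hdist : ∀ z w : L0Ext.CE n, ndist μ (L0Ext.NC n) z w = dist z w := by
      intro z w
      exact (L0Ext.dist_eq_phi_NC n z w).symm
    have hcauchy : CauchySeq x := by
      refine Metric.cauchySeq_iff.mpr fun ε hε => ?_
      obtain ⟨N, hN⟩ := hx ε hε
      exact ⟨N, fun m hm k hk => by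
        have := hN m hm k hk
        rwa [show RNMod.dist _ (x m) (x k) = dist (x m) (x k) from hdist _ _] at this⟩
    obtain ⟨y, hy⟩ := cauchySeq_tendsto_of_complete hcauchy
    refine ⟨y, ?_⟩
    have := tendsto_iff_dist_tendsto_zero.mp hy
    refine this.congr fun k => ?_
    exact (hdist (x k) y).symm
  · -- L^∞-module homomorphism
    constructor
    · exact fun x y => L0Ext.toC_add n x y
    · intro ξ x
      show L0Ext.toC n (ξ • x) = L0Ext.smulC n (ξ : Ω →ₘ[μ] ℝ) (L0Ext.toC n x)
      rw [L0Ext.smulC_coe_linf, L0Ext.mulL_toC]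
  · -- norm preserving
    exact fun x => L0Ext.NC_toC n x
  · -- dense range
    intro y ε hε
    obtain ⟨x, hx⟩ := Metric.denseRange_iff.mp (L0Ext.toC_dense n) y ε hε
    refine ⟨x, ?_⟩
    have hdist : ndist μ (L0Ext.NC n) (L0Ext.toC n x) y = dist (L0Ext.toC n x) y :=
      (L0Ext.dist_eq_phi_NC n _ _).symm
    show ndist μ (L0Ext.NC n) (L0Ext.toC n x) y < ε
    rw [hdist, dist_comm]
    exact hx

end
end

section
/- Let S be a complete random normed module over L^0. For every sequence {x_n} in S and every countable measurable partition {A_n} of Ω, there exists a unique x ∈ S such that Ĩ_{A_n} x = Ĩ_{A_n} x_n for all n, where Ĩ_{A_n} denotes the equivalence class of the indicator function of A_n. (In particular, every complete random normed module has the countable concatenation property.) -/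
open MeasureTheory Filter
noncomputable section

variable {Ω : Type} [MeasurableSpace Ω] {μ : Measure Ω}

section AuxCC

variable {Ω : Type} [MeasurableSpace Ω] {μ : Measure Ω}

lemma Pind_coe (P : MPartition Ω) (k : ℕ) :
    (P.ind μ k : Ω → ℝ) =ᵐ[μ] (P.A k).indicator 1 :=
  AEEqFun.coeFn_mk _ _

lemma Pind_mul_ne (P : MPartition Ω) {m k : ℕ} (h : m ≠ k) :
    P.ind μ m * P.ind μ k = 0 := by
  apply AEEqFun.ext
  filter_upwards [AEEqFun.coeFn_mul (P.ind μ m) (P.ind μ k), Pind_coe P m, Pind_coe P k,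
    AEEqFun.coeFn_zero (β := ℝ) (μ := μ)] with ω h1 h2 h3 h4
  rw [h1, h4]
  simp only [Pi.mul_apply, h2, h3, Pi.zero_apply]
  by_cases hm : ω ∈ P.A m
  · have hk : ω ∉ P.A k := fun hk =>
      Set.eq_empty_iff_forall_notMem.mp (P.disj m k h) ω ⟨hm, hk⟩
    simp [Set.indicator_of_notMem hk]
  · simp [Set.indicator_of_notMem hm]

lemma Pind_mul_self (P : MPartition Ω) (k : ℕ) :
    P.ind μ k * P.ind μ k = P.ind μ k := by
  apply AEEqFun.ext
  filter_upwards [AEEqFun.coeFn_mul (P.ind μ k) (P.ind μ k), Pind_coe P k] with ω h1 h2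
  rw [h1]
  simp only [Pi.mul_apply, h2]
  by_cases hk : ω ∈ P.A k <;> simp [hk]

lemma rnorm_zero (S : RNMod Ω μ) : S.rnorm 0 = 0 := (S.isRNNorm.eq_zero_iff 0).mpr rfl

lemma rnorm_nonneg_ae (S : RNMod Ω μ) (v : S.carrier) :
    ∀ᵐ ω ∂μ, 0 ≤ (S.rnorm v : Ω → ℝ) ω := by
  filter_upwards [AEEqFun.coeFn_le.mpr (S.isRNNorm.nonneg v),
    AEEqFun.coeFn_zero (β := ℝ) (μ := μ)] with ω h1 h2
  rw [h2] at h1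
  simpa using h1

lemma rnorm_neg_sub (S : RNMod Ω μ) (a b : S.carrier) :
    S.rnorm (a - b) = S.rnorm (b - a) := by
  have h : a - b = (-1 : Ω →ₘ[μ] ℝ) • (b - a) := by
    rw [neg_smul, one_smul, neg_sub]
  have habs : |(-1 : Ω →ₘ[μ] ℝ)| = 1 := by
    apply AEEqFun.ext
    filter_upwards [AEEqFun.coeFn_abs (-1 : Ω →ₘ[μ] ℝ),
      AEEqFun.coeFn_neg (1 : Ω →ₘ[μ] ℝ), AEEqFun.coeFn_one (β := ℝ) (μ := μ)] with ω h1 h2 h3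
    rw [h1, h2, h3]
    simp [h3]
  rw [h, S.isRNNorm.norm_smul, habs, one_mul]

lemma rnorm_ind_smul (S : RNMod Ω μ) (P : MPartition Ω) (k : ℕ) (v : S.carrier) :
    ∀ᵐ ω ∂μ, (S.rnorm (P.ind μ k • v) : Ω → ℝ) ω
      = (P.A k).indicator 1 ω * (S.rnorm v : Ω → ℝ) ω := by
  have h := S.isRNNorm.norm_smul (P.ind μ k) v
  filter_upwards [AEEqFun.coeFn_mul |P.ind μ k| (S.rnorm v),
    AEEqFun.coeFn_abs (P.ind μ k), Pind_coe P k] with ω h1 h2 h3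
  rw [h, h1, Pi.mul_apply, h2, h3]
  by_cases hk : ω ∈ P.A k <;> simp [hk]

lemma rnorm_sum_le_ae (S : RNMod Ω μ) (f : ℕ → S.carrier) (t : Finset ℕ) :
    ∀ᵐ ω ∂μ, (S.rnorm (∑ j ∈ t, f j) : Ω → ℝ) ω ≤ ∑ j ∈ t, (S.rnorm (f j) : Ω → ℝ) ω := by
  classical
  induction t using Finset.induction_on with
  | empty =>
    filter_upwards [AEEqFun.coeFn_zero (β := ℝ) (μ := μ)] with ω h0
    simp only [Finset.sum_empty, rnorm_zero, h0, Pi.zero_apply, le_refl]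
  | @insert a s ha ih =>
    have hle := AEEqFun.coeFn_le.mpr (S.isRNNorm.norm_add_le (f a) (∑ j ∈ s, f j))
    filter_upwards [hle, AEEqFun.coeFn_add (S.rnorm (f a)) (S.rnorm (∑ j ∈ s, f j)), ih]
      with ω h1 h2 h3
    rw [Finset.sum_insert ha, Finset.sum_insert ha]
    calc (S.rnorm (f a + ∑ j ∈ s, f j) : Ω → ℝ) ω
        ≤ ((S.rnorm (f a) + S.rnorm (∑ j ∈ s, f j)) : Ω →ₘ[μ] ℝ) ω := h1
      _ = (S.rnorm (f a) : Ω → ℝ) ω + (S.rnorm (∑ j ∈ s, f j) : Ω → ℝ) ω := h2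
      _ ≤ (S.rnorm (f a) : Ω → ℝ) ω + ∑ j ∈ s, (S.rnorm (f j) : Ω → ℝ) ω := by linarith

lemma min_one_abs_integrable [IsFiniteMeasure μ] (g : Ω →ₘ[μ] ℝ) :
    Integrable (fun ω => min 1 |g ω|) μ := by
  refine Integrable.mono' (integrable_const 1)
    ((continuous_const.min continuous_abs).comp_aestronglyMeasurable g.aestronglyMeasurable)
    (ae_of_all μ fun ω => ?_)
  rw [Real.norm_eq_abs, abs_of_nonneg (le_min zero_le_one (abs_nonneg _))]
  exact min_le_left _ _

lemma ndist_nonneg' (S : RNMod Ω μ) (a b : S.carrier) : 0 ≤ ndist μ S.rnorm a b :=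
  integral_nonneg fun ω => le_min zero_le_one (abs_nonneg _)

lemma ndist_symm' (S : RNMod Ω μ) (a b : S.carrier) :
    ndist μ S.rnorm a b = ndist μ S.rnorm b a := by
  unfold ndist
  rw [rnorm_neg_sub]

lemma eq_of_ndist_zero [IsFiniteMeasure μ] (S : RNMod Ω μ) (a b : S.carrier)
    (h : ndist μ S.rnorm a b = 0) : a = b := by
  unfold ndist at h
  have hint := min_one_abs_integrable (μ := μ) (S.rnorm (a - b))
  have h0 : (fun ω => min 1 |(S.rnorm (a - b) : Ω → ℝ) ω|) =ᵐ[μ] 0 :=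
    (integral_eq_zero_iff_of_nonneg_ae
      (ae_of_all μ fun ω => le_min zero_le_one (abs_nonneg _)) hint).mp h
  have hz : S.rnorm (a - b) = 0 := by
    apply AEEqFun.ext
    filter_upwards [h0, AEEqFun.coeFn_zero (β := ℝ) (μ := μ)] with ω h1 h2
    rw [h2]
    simp only [Pi.zero_apply] at h1 ⊢
    by_contra hne
    have hpos : (0:ℝ) < min 1 |(S.rnorm (a - b) : Ω → ℝ) ω| :=
      lt_min zero_lt_one (abs_pos.mpr hne)
    linarith
  exact sub_eq_zero.mp ((S.isRNNorm.eq_zero_iff _).mp hz)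

lemma ndist_ind_smul_le [IsFiniteMeasure μ] (S : RNMod Ω μ) (P : MPartition Ω) (k : ℕ)
    (a b : S.carrier) :
    ndist μ S.rnorm (P.ind μ k • a) (P.ind μ k • b) ≤ ndist μ S.rnorm a b := by
  unfold ndist
  have hd : P.ind μ k • a - P.ind μ k • b = P.ind μ k • (a - b) := (smul_sub _ _ _).symm
  rw [hd]
  refine integral_mono_ae (min_one_abs_integrable _) (min_one_abs_integrable _) ?_
  filter_upwards [rnorm_ind_smul S P k (a - b), rnorm_nonneg_ae S (a - b)] with ω hsm h0
  rw [hsm]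
  by_cases hk : ω ∈ P.A k
  · simp [Set.indicator_of_mem hk]
  · rw [Set.indicator_of_notMem hk, zero_mul, abs_zero]
    rw [min_eq_right zero_le_one]
    exact le_min zero_le_one (abs_nonneg _)

end AuxCC


/-- in a complete random normed module, for every sequence `{x_n}` and
every countable measurable partition `{A_n}` of `Ω` there exists a unique `x` with
`Ĩ_{A_n} x = Ĩ_{A_n} x_n` for all `n` (the countable concatenation property). -/
theorem complete_RNMod_countable_concatenation
    {Ω : Type} [MeasurableSpace Ω] (μ : Measure Ω) [IsProbabilityMeasure μ]
    (S : RNMod Ω μ) (hS : S.Complete)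
    (x : ℕ → S.carrier) (P : MPartition Ω) :
    ∃! z : S.carrier, ∀ k, P.ind μ k • z = P.ind μ k • x k := by
  classical
  set y : ℕ → S.carrier := fun N => ∑ j ∈ Finset.range N, P.ind μ j • x j with hy
  set B : ℕ → Set Ω := fun k => ⋃ j, ⋃ (_ : k ≤ j), P.A j with hB
  have hBmeas : ∀ k, MeasurableSet (B k) := fun k =>
    MeasurableSet.iUnion fun j => MeasurableSet.iUnion fun _ => P.meas j
  have hBanti : Antitone B := fun k l hkl =>
    Set.iUnion₂_subset fun j hj => Set.subset_iUnion₂ (s := fun j _ => P.A j) j (hkl.trans hj)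
  have hBinter : ⋂ k, B k = ∅ := by
    ext ω
    simp only [Set.mem_empty_iff_false, iff_false]
    intro hmem
    simp only [hB, Set.mem_iInter, Set.mem_iUnion] at hmem
    obtain ⟨j, _, hj⟩ := hmem 0
    obtain ⟨j', hj', hj'2⟩ := hmem (j + 1)
    have hne : j ≠ j' := by omega
    exact Set.eq_empty_iff_forall_notMem.mp (P.disj j j' hne) ω ⟨hj, hj'2⟩
  have hμB : Tendsto (fun k => (μ (B k)).toReal) atTop (nhds 0) := by
    have h1 : Tendsto (fun k => μ (B k)) atTop (nhds (μ (⋂ k, B k))) :=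
      tendsto_measure_iInter_atTop (fun k => (hBmeas k).nullMeasurableSet) hBanti
        ⟨0, measure_ne_top μ _⟩
    rw [hBinter, measure_empty] at h1
    have h2 := (ENNReal.tendsto_toReal (ENNReal.zero_ne_top)).comp h1
    simpa [Function.comp_def] using h2
  have hbound : ∀ k m, k ≤ m → ndist μ S.rnorm (y m) (y k) ≤ (μ (B k)).toReal := by
    intro k m hkm
    have hdiff : y m - y k = ∑ j ∈ Finset.Ico k m, P.ind μ j • x j := by
      simp only [hy]
      exact (Finset.sum_Ico_eq_sub _ hkm).symm
    unfold ndist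
    rw [hdiff, ← measureReal_def, ← integral_indicator_one (hBmeas k)]
    refine integral_mono_ae (min_one_abs_integrable _)
      ((integrable_const (1:ℝ)).indicator (hBmeas k)) ?_
    filter_upwards [rnorm_sum_le_ae S (fun j => P.ind μ j • x j) (Finset.Ico k m),
      rnorm_nonneg_ae S (∑ j ∈ Finset.Ico k m, P.ind μ j • x j),
      ae_all_iff.mpr (fun j => rnorm_ind_smul S P j (x j))] with ω hsum h0 hind
    by_cases hω : ω ∈ B k
    · rw [Set.indicator_of_mem hω]
      simpa using min_le_left 1 |(S.rnorm (∑ j ∈ Finset.Ico k m, P.ind μ j • x j) : Ω → ℝ) ω|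
    · have hzero : ∀ j ∈ Finset.Ico k m, ((P.A j).indicator (1 : Ω → ℝ)) ω = 0 := by
        intro j hj
        have hnot : ω ∉ P.A j := fun hmem =>
          hω (Set.mem_iUnion₂.mpr ⟨j, (Finset.mem_Ico.mp hj).1, hmem⟩)
        exact Set.indicator_of_notMem hnot _
      have hsum0 : (S.rnorm (∑ j ∈ Finset.Ico k m, P.ind μ j • x j) : Ω → ℝ) ω ≤ 0 := by
        refine hsum.trans (le_of_eq (Finset.sum_eq_zero fun j hj => ?_))
        rw [hind j, hzero j hj, zero_mul]
      have heq0 : (S.rnorm (∑ j ∈ Finset.Ico k m, P.ind μ j • x j) : Ω → ℝ) ω = 0 :=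
        le_antisymm hsum0 h0
      rw [Set.indicator_of_notMem hω, heq0, abs_zero]
      simp
  have hCauchy : dCauchy S.dist y := by
    intro ε hε
    obtain ⟨N, hN⟩ := eventually_atTop.mp (hμB.eventually_lt_const hε)
    refine ⟨N, fun m hm k hk => ?_⟩
    rcases le_total k m with h | h
    · exact lt_of_le_of_lt (hbound k m h) (hN k hk)
    · have hsymm : S.dist (y m) (y k) = ndist μ S.rnorm (y k) (y m) := ndist_symm' S _ _
      rw [hsymm]
      exact lt_of_le_of_lt (hbound m k h) (hN m hm)
  obtain ⟨z, hz⟩ := hS y hCauchy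
  have hprop : ∀ k, P.ind μ k • z = P.ind μ k • x k := by
    intro k
    have hyN : ∀ N, k < N → P.ind μ k • y N = P.ind μ k • x k := by
      intro N hkN
      simp only [hy]
      rw [Finset.smul_sum]
      rw [Finset.sum_eq_single k]
      · rw [smul_smul, Pind_mul_self]
      · intro j hj hjk
        rw [smul_smul, Pind_mul_ne P (Ne.symm hjk), zero_smul]
      · intro hk
        exact absurd (Finset.mem_range.mpr hkN) hk
    have hle : ∀ N, k < N →
        ndist μ S.rnorm (P.ind μ k • x k) (P.ind μ k • z) ≤ S.dist (y N) z := by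
      intro N hkN
      calc ndist μ S.rnorm (P.ind μ k • x k) (P.ind μ k • z)
          = ndist μ S.rnorm (P.ind μ k • y N) (P.ind μ k • z) := by rw [hyN N hkN]
        _ ≤ ndist μ S.rnorm (y N) z := ndist_ind_smul_le S P k (y N) z
    have hz' : Tendsto (fun N => S.dist (y N) z) atTop (nhds 0) := hz
    have h0 : ndist μ S.rnorm (P.ind μ k • x k) (P.ind μ k • z) ≤ 0 :=
      ge_of_tendsto hz' (eventually_atTop.mpr ⟨k + 1, fun N hN => hle N (by omega)⟩)
    have hzero := le_antisymm h0 (ndist_nonneg' S _ _)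
    exact (eq_of_ndist_zero S _ _ hzero).symm
  refine ⟨z, hprop, ?_⟩
  intro w hw
  have hk : ∀ k, P.ind μ k • (w - z) = 0 := fun k => by
    rw [smul_sub, hw k, hprop k, sub_self]
  have hnz : S.rnorm (w - z) = 0 := by
    apply AEEqFun.ext
    have hcov : ∀ ω : Ω, ∃ k, ω ∈ P.A k := by
      intro ω
      have hm : ω ∈ ⋃ k, P.A k := by rw [P.cover]; trivial
      exact Set.mem_iUnion.mp hm
    filter_upwards [ae_all_iff.mpr (fun k => rnorm_ind_smul S P k (w - z)),
      AEEqFun.coeFn_zero (β := ℝ) (μ := μ)] with ω hind h0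
    obtain ⟨k, hkmem⟩ := hcov ω
    have h1 := hind k
    rw [hk k, rnorm_zero, h0, Set.indicator_of_mem hkmem] at h1
    simp only [Pi.zero_apply, Pi.one_apply, one_mul] at h1
    rw [h0]
    simp only [Pi.zero_apply]
    exact h1.symm
  exact sub_eq_zero.mp ((S.isRNNorm.eq_zero_iff _).mp hnz)


end
end

section
/- Let E be a subset of a complete random normed module E_0 that is also an L^∞-submodule (closed under addition and multiplication by elements of L^∞). Then H^0_cc(E), the set of all countable concatenations Σ_n Ĩ_{A_n} x_n with x_n ∈ E and {A_n} a countable measurable partition of Ω, is an L^0-submodule of E_0. -/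
open MeasureTheory Filter
noncomputable section

variable {Ω : Type} [MeasurableSpace Ω] {μ : Measure Ω}

/-! ### Auxiliary lemmas -/

lemma indL0_mul {A B : Set Ω} (hA : MeasurableSet A) (hB : MeasurableSet B) :
    indL0 μ A hA * indL0 μ B hB = indL0 μ (A ∩ B) (hA.inter hB) := by
  unfold indL0
  rw [AEEqFun.mk_mul_mk]
  exact AEEqFun.mk_eq_mk.2 (Filter.Eventually.of_forall fun ω => by
    by_cases h1 : ω ∈ A <;> by_cases h2 : ω ∈ B <;>
      simp [Set.indicator_apply, h1, h2])

lemma indL0_idem {A : Set Ω} (hA : MeasurableSet A) :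
    indL0 μ A hA * indL0 μ A hA = indL0 μ A hA := by
  unfold indL0
  rw [AEEqFun.mk_mul_mk]
  exact AEEqFun.mk_eq_mk.2 (Filter.Eventually.of_forall fun ω => by
    by_cases h : ω ∈ A <;> simp [Set.indicator_apply, h])

/-- the trivial partition of `Ω`. -/
def trivPartition (Ω : Type) [MeasurableSpace Ω] : MPartition Ω where
  A k := if k = 0 then Set.univ else ∅
  meas k := by by_cases h : k = 0 <;> simp [h]
  disj m k h := by
    by_cases hm : m = 0
    · by_cases hk : k = 0
      · exact absurd (hm.trans hk.symm) h
      · simp [hm, hk]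
    · simp [hm]
  cover := Set.eq_univ_of_forall fun ω => Set.mem_iUnion.2 ⟨0, by simp⟩

/-- the common refinement of two countable measurable partitions. -/
def interPartition (P Q : MPartition Ω) : MPartition Ω where
  A n := P.A (Nat.unpair n).1 ∩ Q.A (Nat.unpair n).2
  meas n := (P.meas _).inter (Q.meas _)
  disj m k h := by
    by_cases h1 : (Nat.unpair m).1 = (Nat.unpair k).1
    · have h2 : (Nat.unpair m).2 ≠ (Nat.unpair k).2 := by
        intro h2
        apply h
        have hm := Nat.pair_unpair m
        have hk := Nat.pair_unpair k
        rw [← hm, ← hk, h1, h2]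
      apply Set.eq_empty_iff_forall_notMem.2
      rintro ω ⟨⟨_, hq1⟩, _, hq2⟩
      have hmem : ω ∈ Q.A (Nat.unpair m).2 ∩ Q.A (Nat.unpair k).2 := ⟨hq1, hq2⟩
      rw [Q.disj _ _ h2] at hmem
      exact hmem
    · apply Set.eq_empty_iff_forall_notMem.2
      rintro ω ⟨⟨hp1, _⟩, hp2, _⟩
      have hmem : ω ∈ P.A (Nat.unpair m).1 ∩ P.A (Nat.unpair k).1 := ⟨hp1, hp2⟩
      rw [P.disj _ _ h1] at hmem
      exact hmem
  cover := by
    apply Set.eq_univ_of_forall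
    intro ω
    have hp : ω ∈ ⋃ k, P.A k := P.cover ▸ Set.mem_univ ω
    have hq : ω ∈ ⋃ k, Q.A k := Q.cover ▸ Set.mem_univ ω
    obtain ⟨i, hi⟩ := Set.mem_iUnion.1 hp
    obtain ⟨j, hj⟩ := Set.mem_iUnion.1 hq
    exact Set.mem_iUnion.2 ⟨Nat.pair i j, by rw [Nat.unpair_pair]; exact ⟨hi, hj⟩⟩

lemma interPartition_ind (P Q : MPartition Ω) (μ : Measure Ω) (n : ℕ) :
    (interPartition P Q).ind μ n = P.ind μ (Nat.unpair n).1 * Q.ind μ (Nat.unpair n).2 :=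
  (indL0_mul _ _).symm

lemma MPartition.ind_idem (P : MPartition Ω) (μ : Measure Ω) (k : ℕ) :
    P.ind μ k * P.ind μ k = P.ind μ k := indL0_idem _

/-- the partition of `Ω` by the size of `|ξ|`. -/
def normPartition (μ : Measure Ω) (ξ : Ω →ₘ[μ] ℝ) : MPartition Ω where
  A n := {ω | (n : ℝ) ≤ |ξ ω| ∧ |ξ ω| < n + 1}
  meas n := by
    have hm : Measurable fun ω => |ξ ω| := ξ.measurable.abs
    exact (measurableSet_le measurable_const hm).inter (measurableSet_lt hm measurable_const)
  disj m k h := by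
    apply Set.eq_empty_iff_forall_notMem.2
    rintro ω ⟨⟨h1, h2⟩, h3, h4⟩
    apply h
    have hm : m = ⌊|ξ ω|⌋₊ := ((Nat.floor_eq_iff (abs_nonneg _)).2 ⟨h1, h2⟩).symm
    have hk : k = ⌊|ξ ω|⌋₊ := ((Nat.floor_eq_iff (abs_nonneg _)).2 ⟨h3, h4⟩).symm
    rw [hm, hk]
  cover := Set.eq_univ_of_forall fun ω => Set.mem_iUnion.2
    ⟨⌊|ξ ω|⌋₊, Nat.floor_le (abs_nonneg _), Nat.lt_floor_add_one _⟩

lemma normPartition_ind_mul_mem (μ : Measure Ω) (ξ : Ω →ₘ[μ] ℝ) (j : ℕ) :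
    (normPartition μ ξ).ind μ j * ξ ∈ Linf μ := by
  refine ⟨(j : ℝ) + 1, ?_⟩
  have hmk : (normPartition μ ξ).ind μ j
      = AEEqFun.mk (((normPartition μ ξ).A j).indicator (1 : Ω → ℝ))
        ((measurable_const.indicator ((normPartition μ ξ).meas j)).aestronglyMeasurable) := rfl
  filter_upwards [AEEqFun.coeFn_mul ((normPartition μ ξ).ind μ j) ξ,
    hmk ▸ AEEqFun.coeFn_mk (((normPartition μ ξ).A j).indicator (1 : Ω → ℝ))
      ((measurable_const.indicator ((normPartition μ ξ).meas j)).aestronglyMeasurable)]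
    with ω h1 h2
  rw [h1, Pi.mul_apply, h2]
  by_cases hω : ω ∈ (normPartition μ ξ).A j
  · have hlt : |ξ ω| < (j : ℝ) + 1 := hω.2
    simp only [Set.indicator_of_mem hω, Pi.one_apply, one_mul]
    exact hlt.le
  · simp only [Set.indicator_of_notMem hω, zero_mul, abs_zero]
    positivity

/-- for an `L^∞`-submodule `E` of a complete random normed module `E₀`,
the countable concatenation hull `H⁰_cc(E)` is an `L⁰`-submodule of `E₀`. -/
theorem Hcc_is_L0_submodule
    {Ω : Type} [MeasurableSpace Ω] (μ : Measure Ω) [IsProbabilityMeasure μ]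
    (S : RNMod Ω μ) (hS : S.Complete) (E : Set S.carrier)
    (h0 : (0 : S.carrier) ∈ E)
    (hadd : ∀ x ∈ E, ∀ y ∈ E, x + y ∈ E)
    (hsmul : ∀ (ξ : Linf μ), ∀ x ∈ E, (ξ : Ω →ₘ[μ] ℝ) • x ∈ E) :
    (0 : S.carrier) ∈ Hcc S E ∧
    (∀ x ∈ Hcc S E, ∀ y ∈ Hcc S E, x + y ∈ Hcc S E) ∧
    (∀ (ξ : Ω →ₘ[μ] ℝ), ∀ x ∈ Hcc S E, ξ • x ∈ Hcc S E) := by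
  refine ⟨⟨fun _ => 0, trivPartition Ω, fun _ => h0, fun _ => rfl⟩, ?_, ?_⟩
  · rintro x ⟨a, P, ha, hPa⟩ y ⟨b, Q, hb, hQb⟩
    refine ⟨fun n => a (Nat.unpair n).1 + b (Nat.unpair n).2, interPartition P Q,
      fun n => hadd _ (ha _) _ (hb _), fun n => ?_⟩
    set i := (Nat.unpair n).1
    set j := (Nat.unpair n).2
    set p := P.ind μ i
    set q := Q.ind μ j
    have h1 : (p * q) • x = (p * q) • a i := by
      rw [mul_comm, mul_smul, hPa i, ← mul_smul, mul_comm]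
    have h2 : (p * q) • y = (p * q) • b j := by
      rw [mul_smul, hQb j, ← mul_smul]
    rw [interPartition_ind, smul_add, h1, h2, ← smul_add]
  · rintro ξ x ⟨a, P, ha, hPa⟩
    refine ⟨fun n => ((normPartition μ ξ).ind μ (Nat.unpair n).2 * ξ) • a (Nat.unpair n).1,
      interPartition P (normPartition μ ξ),
      fun n => hsmul ⟨_, normPartition_ind_mul_mem μ ξ (Nat.unpair n).2⟩ _ (ha _),
      fun n => ?_⟩
    set i := (Nat.unpair n).1
    set j := (Nat.unpair n).2
    set p := P.ind μ i
    set q := (normPartition μ ξ).ind μ j with hq_def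
    have h1 : (p * q * ξ) • x = (p * q * ξ) • a i := by
      rw [show p * q * ξ = (q * ξ) * p by ring, mul_smul, hPa i, ← mul_smul]
    have h2 : (p * q) * (q * ξ) = p * q * ξ := by
      rw [show (p * q) * (q * ξ) = p * (q * q) * ξ by ring,
        MPartition.ind_idem (normPartition μ ξ) μ j]
    rw [interPartition_ind, smul_smul, smul_smul, h2, h1]

end
end
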